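/- arXiv:1806.02316 — 6 statements merged into one kernel-verified Lean document; each statement's English description precedes it below -/
import Mathlib

section
/- The exponential generating function G_S(z) = Σ_{n≥0} (B_{n,S}/n!) z^n satisfies the differential equation G_S'(z) = G_S(z)·(e^z − α'(z)), where α(z) = Σ_{k∈S} z^k/k!, as formal power series. -/
open Finset PowerSeries

variable {α β : Type*} [DecidableEq α] [DecidableEq β]

/-- Transport a finpartition of `s` along an embedding. -/
def Finpartition.mapEmb (f : α ↪ β) {s : Finset α} (P : Finpartition s) :
    Finpartition (s.map f) where
  parts := P.parts.image (Finset.map f)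
  supIndep := by
    rw [Finset.supIndep_iff_pairwiseDisjoint]
    intro x hx y hy hxy
    simp only [coe_image, Set.mem_image, mem_coe] at hx hy
    obtain ⟨p, hp, rfl⟩ := hx
    obtain ⟨q, hq, rfl⟩ := hy
    have := P.disjoint hp hq (fun h => hxy (by rw [h]))
    simpa only [Function.onFun, id, Finset.disjoint_map] using this
  sup_parts := by
    ext x
    rw [Finset.sup_image]
    simp only [Finset.mem_sup, Function.comp, id, Finset.mem_map]
    constructor
    · rintro ⟨p, hp, a, ha, rfl⟩
      exact ⟨a, P.le hp ha, rfl⟩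
    · rintro ⟨a, ha, rfl⟩
      obtain ⟨p, hp, hap⟩ := P.exists_mem ha
      exact ⟨p, hp, a, hap, rfl⟩
  bot_notMem := by
    simp only [bot_eq_empty, mem_image]
    rintro ⟨p, hp, h⟩
    exact P.bot_notMem (by rwa [Finset.map_eq_empty.mp h] at hp)

@[simp] lemma Finpartition.parts_mapEmb (f : α ↪ β) {s : Finset α} (P : Finpartition s) :
    (P.mapEmb f).parts = P.parts.image (Finset.map f) := rfl

/-- Pull back a finpartition of `s.map f` along the embedding. -/
noncomputable def Finpartition.mapEmbInv (f : α ↪ β) {s : Finset α} (Q : Finpartition (s.map f)) :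
    Finpartition s where
  parts := Q.parts.image (fun p => p.preimage f f.injective.injOn)
  supIndep := by
    rw [Finset.supIndep_iff_pairwiseDisjoint]
    intro x hx y hy hxy
    simp only [coe_image, Set.mem_image, mem_coe] at hx hy
    obtain ⟨p, hp, rfl⟩ := hx
    obtain ⟨q, hq, rfl⟩ := hy
    have : p ≠ q := fun h => hxy (by rw [h])
    have hd : Disjoint p q := Q.disjoint hp hq this
    show Disjoint _ _
    rw [Finset.disjoint_left] at hd ⊢
    intro a ha ha'
    simp only [id, Finset.mem_preimage] at ha ha'
    exact hd ha ha'
  sup_parts := by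
    ext x
    rw [Finset.sup_image]
    simp only [Finset.mem_sup, Function.comp, id, Finset.mem_preimage]
    constructor
    · rintro ⟨p, hp, hx⟩
      have := Q.le hp hx
      rw [Finset.mem_map] at this
      obtain ⟨a, ha, he⟩ := this
      rwa [← f.injective he]
    · intro hx
      obtain ⟨p, hp, hap⟩ := Q.exists_mem (Finset.mem_map_of_mem f hx)
      exact ⟨p, hp, hap⟩
  bot_notMem := by
    simp only [bot_eq_empty, mem_image]
    rintro ⟨p, hp, h⟩
    obtain ⟨b, hb⟩ := Q.nonempty_of_mem_parts hp
    have hbs := Q.le hp hb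
    rw [Finset.mem_map] at hbs
    obtain ⟨a, _, rfl⟩ := hbs
    have : a ∈ p.preimage f f.injective.injOn := Finset.mem_preimage.mpr hb
    rw [h] at this
    exact absurd this (Finset.notMem_empty a)

/-- Finpartitions transport along embeddings. -/
noncomputable def finpartitionEquivMap (f : α ↪ β) (s : Finset α) :
    Finpartition s ≃ Finpartition (s.map f) where
  toFun := Finpartition.mapEmb f
  invFun := Finpartition.mapEmbInv f
  left_inv P := by
    ext1
    show (P.parts.image (Finset.map f)).image _ = P.parts
    rw [Finset.image_image]
    have : ∀ p ∈ P.parts, ((fun q => Finset.preimage q f f.injective.injOn) ∘ Finset.map f) p = id p := by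
      intro p hp
      simp [Finset.preimage_map]
    rw [Finset.image_congr this, Finset.image_id]
  right_inv Q := by
    ext1
    show (Q.parts.image _).image (Finset.map f) = Q.parts
    rw [Finset.image_image]
    have : ∀ p ∈ Q.parts, (Finset.map f ∘ fun q => Finset.preimage q f f.injective.injOn) p = id p := by
      intro p hp
      simp only [Function.comp, id]
      ext b
      simp only [Finset.mem_map, Finset.mem_preimage]
      constructor
      · rintro ⟨a, ha, rfl⟩; exact ha
      · intro hb
        have := Q.le hp hb
        rw [Finset.mem_map] at this
        obtain ⟨a, _, rfl⟩ := this
        exact ⟨a, hb, rfl⟩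
    rw [Finset.image_congr this, Finset.image_id]

/-- `BS n S` is the number of set partitions of an `n`-element set
none of whose block sizes lies in `S` (so `BS 0 S = 1`). -/
noncomputable def BS (n : ℕ) (S : Set ℕ) : ℕ :=
  Nat.card {P : Finpartition (Finset.univ : Finset (Fin n)) // ∀ p ∈ P.parts, p.card ∉ S}

lemma BS_eq_card (S : Set ℕ) {α : Type*} [DecidableEq α] (s : Finset α) :
    Nat.card {P : Finpartition s // ∀ p ∈ P.parts, p.card ∉ S} = BS s.card S := by
  classical
  obtain ⟨f, hf⟩ : ∃ f : Fin s.card ↪ α, Finset.univ.map f = s := by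
    refine ⟨(s.equivFin.symm.toEmbedding).trans (Function.Embedding.subtype _), ?_⟩
    ext a
    simp only [Finset.mem_map, Finset.mem_univ, true_and, Function.Embedding.trans_apply,
      Equiv.coe_toEmbedding, Function.Embedding.coe_subtype]
    constructor
    · rintro ⟨i, rfl⟩; exact (s.equivFin.symm i).2
    · intro ha; exact ⟨s.equivFin ⟨a, ha⟩, by simp⟩
  unfold BS
  symm
  apply Nat.card_congr
  refine Equiv.subtypeEquiv ((finpartitionEquivMap f Finset.univ).trans
    (Equiv.refl _ |>.trans ?_)) ?_
  · exact ⟨fun P => P.copy hf, fun P => P.copy hf.symm, fun P => by ext1; rfl, fun P => by ext1; rfl⟩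
  · intro P
    simp only [Equiv.trans_apply, Equiv.refl_apply, Equiv.coe_fn_mk]
    show _ ↔ ∀ p ∈ ((P.mapEmb f).copy hf).parts, p.card ∉ S
    have : ((P.mapEmb f).copy hf).parts = P.parts.image (Finset.map f) := rfl
    rw [this]
    constructor
    · intro h p hp
      rw [Finset.mem_image] at hp
      obtain ⟨q, hq, rfl⟩ := hp
      rw [Finset.card_map]
      exact h q hq
    · intro h p hp
      have := h (p.map f) (Finset.mem_image_of_mem _ hp)
      rwa [Finset.card_map] at this

section Recurrence

variable {α : Type*} [DecidableEq α]

lemma avoid_parts_of_mem {s : Finset α} (P : Finpartition s) {b : Finset α}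
    (hb : b ∈ P.parts) : (P.avoid b).parts = P.parts.erase b := by
  ext c
  rw [Finpartition.mem_avoid, Finset.mem_erase]
  constructor
  · rintro ⟨d, hd, hdb, rfl⟩
    have hne : d ≠ b := fun h => hdb (h ▸ le_rfl)
    have : Disjoint d b := P.disjoint hd hb hne
    rw [Finset.sdiff_eq_self_of_disjoint this]
    exact ⟨hne, hd⟩
  · rintro ⟨hne, hc⟩
    refine ⟨c, hc, ?_, ?_⟩
    · intro hle
      obtain ⟨x, hx⟩ := P.nonempty_of_mem_parts hc
      have : Disjoint c b := P.disjoint hc hb hne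
      exact (Finset.disjoint_left.mp this hx) (hle hx)
    · exact Finset.sdiff_eq_self_of_disjoint (P.disjoint hc hb hne)

/-- The backward map: extend a partition of `s \ t` by the block `insert a t`. -/
noncomputable def extendFun (S : Set ℕ) (a : α) (s : Finset α) (ha : a ∉ s) :
    (Σ t : {t : Finset α // t ⊆ s ∧ t.card + 1 ∉ S},
        {Q : Finpartition (s \ t.1) // ∀ p ∈ Q.parts, p.card ∉ S}) →
      {P : Finpartition (insert a s) // ∀ p ∈ P.parts, p.card ∉ S} := by
  rintro ⟨⟨t, hts, htS⟩, Q, hQ⟩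
  refine ⟨Q.extend (b := insert a t) ?_ ?_ ?_, ?_⟩
  · simp [Finset.bot_eq_empty, Finset.insert_ne_empty]
  · rw [Finset.disjoint_left]
    intro x hx
    rw [Finset.mem_sdiff] at hx
    rw [Finset.mem_insert]
    rintro (rfl | hxt)
    · exact ha hx.1
    · exact hx.2 hxt
  · rw [sup_eq_union, Finset.union_comm, Finset.insert_union,
      Finset.union_comm, Finset.sdiff_union_of_subset hts]
  · intro p hp
    rw [Finpartition.extend_parts, Finset.mem_insert] at hp
    rcases hp with rfl | hp
    · rwa [Finset.card_insert_of_notMem (fun h => ha (hts h))]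
    · exact hQ p hp

lemma extendFun_bijective (S : Set ℕ) (a : α) (s : Finset α) (ha : a ∉ s) :
    Function.Bijective (extendFun S a s ha) := by
  constructor
  · rintro ⟨⟨t₁, hts₁, htS₁⟩, Q₁, hQ₁⟩ ⟨⟨t₂, hts₂, htS₂⟩, Q₂, hQ₂⟩ h
    simp only [extendFun, Subtype.mk_eq_mk] at h
    have hparts : insert (insert a t₁) Q₁.parts = insert (insert a t₂) Q₂.parts := by
      have := congrArg Finpartition.parts h
      simpa [Finpartition.extend_parts] using this
    have hmem : insert a t₁ ∈ insert (insert a t₂) Q₂.parts := by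
      rw [← hparts]; exact Finset.mem_insert_self _ _
    have hblock : insert a t₁ = insert a t₂ := by
      rcases Finset.mem_insert.mp hmem with h' | h'
      · exact h'
      · exfalso
        have := Q₂.le h' (Finset.mem_insert_self a t₁)
        rw [Finset.mem_sdiff] at this
        exact ha this.1
    have ht : t₁ = t₂ := by
      have h1 : a ∉ t₁ := fun h => ha (hts₁ h)
      have h2 : a ∉ t₂ := fun h => ha (hts₂ h)
      rw [← Finset.erase_insert h1, ← Finset.erase_insert h2, hblock]
    subst ht
    have hnot : ∀ (Q : Finpartition (s \ t₁)), insert a t₁ ∉ Q.parts := by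
      intro Q hmem'
      have := Q.le hmem' (Finset.mem_insert_self a t₁)
      rw [Finset.mem_sdiff] at this
      exact ha this.1
    have hQparts : Q₁.parts = Q₂.parts := by
      rw [hblock] at hparts
      have := Finset.erase_insert (hnot Q₁)
      rw [← this, hparts, Finset.erase_insert (hnot Q₂)]
    congr 1
    exact Subtype.ext (by ext1; exact hQparts)
  · rintro ⟨P, hP⟩
    have hais : a ∈ insert a s := Finset.mem_insert_self a s
    set b := P.part a with hbdef
    have hb : b ∈ P.parts := P.part_mem.mpr hais
    have hab : a ∈ b := P.mem_part_self.mpr hais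
    set t := b.erase a with htdef
    have hts : t ⊆ s := by
      intro x hx
      rw [Finset.mem_erase] at hx
      have := P.le hb hx.2
      rcases Finset.mem_insert.mp this with h' | h'
      · exact absurd h' hx.1
      · exact h'
    have htS : t.card + 1 ∉ S := by
      rw [Finset.card_erase_add_one hab]
      exact hP b hb
    have hdiff : insert a s \ b = s \ t := by
      rw [htdef]
      ext x
      simp only [Finset.mem_sdiff, Finset.mem_insert, Finset.mem_erase]
      constructor
      · rintro ⟨rfl | hxs, hxb⟩
        · exact absurd hab hxb
        · exact ⟨hxs, fun h => hxb h.2⟩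
      · rintro ⟨hxs, hxt⟩
        have hxa : x ≠ a := fun h => ha (h ▸ hxs)
        exact ⟨Or.inr hxs, fun h => hxt ⟨hxa, h⟩⟩
    refine ⟨⟨⟨t, hts, htS⟩, ⟨(P.avoid b).copy hdiff, ?_⟩⟩, ?_⟩
    · intro p hp
      have : p ∈ P.parts.erase b := by
        rw [← avoid_parts_of_mem P hb]; exact hp
      exact hP p (Finset.mem_of_mem_erase this)
    · simp only [extendFun]
      apply Subtype.ext
      ext1
      show insert (insert a t) ((P.avoid b).parts) = P.parts
      rw [avoid_parts_of_mem P hb, htdef, Finset.insert_erase hab, Finset.insert_erase hb]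

end Recurrence

open Classical in
lemma BS_succ (S : Set ℕ) (n : ℕ) :
    BS (n + 1) S = ∑ j ∈ Finset.range (n + 1),
      if j + 1 ∈ S then 0 else n.choose j * BS (n - j) S := by
  classical
  set a : Fin (n + 1) := Fin.last n with hadef
  set s : Finset (Fin (n + 1)) := Finset.univ.erase a with hsdef
  have ha : a ∉ s := Finset.notMem_erase a _
  have hins : insert a s = Finset.univ := by
    rw [hsdef, Finset.insert_erase (Finset.mem_univ a)]
  have hscard : s.card = n := by
    rw [hsdef, Finset.card_erase_of_mem (Finset.mem_univ a), Finset.card_univ,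
      Fintype.card_fin]
    omega
  have step1 : BS (n + 1) S
      = Nat.card {P : Finpartition (insert a s) // ∀ p ∈ P.parts, p.card ∉ S} := by
    unfold BS
    rw [show (Finset.univ : Finset (Fin (n + 1))) = insert a s from hins.symm]
  rw [step1, Nat.card_congr (Equiv.ofBijective _ (extendFun_bijective S a s ha)).symm]
  have : ∀ (t : {t : Finset (Fin (n+1)) // t ⊆ s ∧ t.card + 1 ∉ S}),
      Fintype {Q : Finpartition (s \ t.1) // ∀ p ∈ Q.parts, p.card ∉ S} :=
    fun t => Fintype.ofFinite _
  rw [Nat.card_eq_fintype_card, Fintype.card_sigma]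
  simp only [← Nat.card_eq_fintype_card]
  have key : ∀ (t : Finset (Fin (n+1))), t ⊆ s →
      Nat.card {Q : Finpartition (s \ t) // ∀ p ∈ Q.parts, p.card ∉ S}
        = BS (n - t.card) S := by
    intro t hts
    rw [BS_eq_card, Finset.card_sdiff_of_subset hts, hscard]
  have hsub := Finset.sum_subtype (F := Subtype.fintype _)
      (p := fun t : Finset (Fin (n+1)) => t ⊆ s ∧ t.card + 1 ∉ S)
      (Finset.univ.filter (fun t : Finset (Fin (n+1)) => t ⊆ s ∧ t.card + 1 ∉ S))
      (fun x => by simp)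
      (fun t => Nat.card {Q : Finpartition (s \ t) // ∀ p ∈ Q.parts, p.card ∉ S})
  rw [← hsub]
  have hfilter : Finset.univ.filter (fun t : Finset (Fin (n+1)) => t ⊆ s ∧ t.card + 1 ∉ S)
      = s.powerset.filter (fun t => t.card + 1 ∉ S) := by
    ext t
    simp [Finset.mem_powerset, and_comm]
  rw [hfilter, Finset.sum_filter, Finset.powerset_card_disjiUnion s]
  refine (Finset.sum_disjiUnion _ _ _).trans ?_
  rw [hscard]
  apply Finset.sum_congr rfl
  intro j hj
  have hconst : ∀ t ∈ Finset.powersetCard j s,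
      (if t.card + 1 ∉ S then
          Nat.card {Q : Finpartition (s \ t) // ∀ p ∈ Q.parts, p.card ∉ S} else 0)
        = (if j + 1 ∈ S then 0 else BS (n - j) S) := by
    intro t ht
    rw [Finset.mem_powersetCard] at ht
    rw [key t ht.1, ht.2]
    by_cases h : j + 1 ∈ S
    · rw [if_neg (by simpa using h), if_pos h]
    · rw [if_pos h, if_neg h]
  rw [Finset.sum_congr rfl hconst, Finset.sum_const, Finset.card_powersetCard, hscard,
    smul_eq_mul]
  by_cases h : j + 1 ∈ S
  · rw [if_pos h, if_pos h, Nat.mul_zero]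
  · rw [if_neg h, if_neg h]

open Classical in
/-- `α(z) = ∑_{k ∈ S} z^k / k!` as a formal power series. -/
noncomputable def alphaPS (S : Set ℕ) : PowerSeries ℚ :=
  PowerSeries.mk fun k => if k ∈ S then (1 : ℚ) / (k.factorial : ℚ) else 0

/-- The EGF `G_S` of `B_{n,S}` satisfies `G_S' = G_S · (e^z − α'(z))`
as formal power series. -/
theorem egf_setPartitions_avoiding_ODE (S : Set ℕ) (h0 : 0 ∉ S) :
    letI G : PowerSeries ℚ := PowerSeries.mk fun n => (BS n S : ℚ) / (n.factorial : ℚ)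
    PowerSeries.derivative ℚ G =
      G * (PowerSeries.exp ℚ - PowerSeries.derivative ℚ (alphaPS S)) := by
  classical
  set G : PowerSeries ℚ := PowerSeries.mk fun n => (BS n S : ℚ) / (n.factorial : ℚ) with hGdef
  ext n
  rw [PowerSeries.coeff_derivative, PowerSeries.coeff_mul]
  have hG : ∀ m, (PowerSeries.coeff m) G = (BS m S : ℚ) / (m.factorial : ℚ) := fun m =>
    PowerSeries.coeff_mk m _
  have hrhs : ∀ p ∈ Finset.HasAntidiagonal.antidiagonal n,
      (PowerSeries.coeff p.1) G *
        (PowerSeries.coeff p.2) (PowerSeries.exp ℚ - PowerSeries.derivative ℚ (alphaPS S))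
      = ((BS p.1 S : ℚ) / (p.1.factorial : ℚ)) *
        ((1 : ℚ) / (p.2.factorial : ℚ) -
          (if p.2 + 1 ∈ S then (1 : ℚ) / ((p.2+1).factorial : ℚ) else 0) * ((p.2 : ℚ) + 1)) := by
    intro p _
    rw [map_sub, hG, PowerSeries.coeff_exp, PowerSeries.coeff_derivative]
    have : (PowerSeries.coeff (p.2 + 1)) (alphaPS S)
        = if p.2 + 1 ∈ S then (1 : ℚ) / ((p.2+1).factorial : ℚ) else 0 :=
      PowerSeries.coeff_mk _ _
    rw [this]
    push_cast
    norm_num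
  rw [Finset.sum_congr rfl hrhs, Finset.Nat.sum_antidiagonal_eq_sum_range_succ_mk]
  rw [hG]
  have hL : ((BS (n+1) S : ℚ)) = ∑ k ∈ Finset.range (n+1),
      (if n - k + 1 ∈ S then (0:ℚ) else ((n.choose k : ℚ) * (BS k S : ℚ))) := by
    rw [BS_succ S n]
    push_cast
    rw [← Finset.sum_range_reflect]
    apply Finset.sum_congr rfl
    intro k hk
    rw [Finset.mem_range] at hk
    have hk' : k ≤ n := Nat.lt_succ_iff.mp hk
    have h1 : n + 1 - 1 - k = n - k := by omega
    rw [h1]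
    have h2 : n - (n - k) = k := by omega
    rw [h2, Nat.choose_symm hk']
  rw [hL, Finset.sum_div, Finset.sum_mul]
  apply Finset.sum_congr rfl
  intro k hk
  rw [Finset.mem_range] at hk
  have hk' : k ≤ n := Nat.lt_succ_iff.mp hk
  have hfact : ∀ m : ℕ, ((m.factorial : ℚ)) ≠ 0 := fun m => by
    exact_mod_cast m.factorial_ne_zero
  by_cases h : n - k + 1 ∈ S
  · rw [if_pos h, if_pos h]
    have hf1 : ((n-k+1).factorial : ℚ) = (((n-k : ℕ) : ℚ) + 1) * ((n-k).factorial : ℚ) := by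
      rw [Nat.factorial_succ]; push_cast; ring
    have h2 : ((1:ℚ) / ((n-k+1).factorial : ℚ)) * (((n-k:ℕ) : ℚ) + 1)
        = 1 / ((n-k).factorial : ℚ) := by
      have hx : (((n-k:ℕ)) : ℚ) + 1 ≠ 0 := by positivity
      rw [hf1]
      calc (1:ℚ) / (((((n-k:ℕ)):ℚ) + 1) * ((n-k).factorial : ℚ)) * ((((n-k:ℕ)):ℚ) + 1)
          = ((((n-k:ℕ)):ℚ) + 1) * 1 / (((((n-k:ℕ)):ℚ) + 1) * ((n-k).factorial : ℚ)) := by ring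
        _ = 1 / ((n-k).factorial : ℚ) := mul_div_mul_left 1 _ hx
    rw [h2, sub_self, mul_zero, zero_div, zero_mul]
  · rw [if_neg h, if_neg h]
    have hchoose : (n.choose k : ℚ) = (n.factorial : ℚ) / ((k.factorial : ℚ) * ((n-k).factorial : ℚ)) :=
      Nat.cast_choose ℚ hk'
    have hfs : ((n+1).factorial : ℚ) = ((n:ℚ)+1) * (n.factorial : ℚ) := by
      rw [Nat.factorial_succ]; push_cast; ring
    rw [hchoose, hfs]
    field_simp
    ring
end

section
/- For all n ≥ 0, the Bell number B_n satisfies B_n = Σ_{k=0}^{n} C(n,k) · P_k · B_{n−k, k+1}, where P_k is the number of practical set partitions of a k-element set and B_{m,j} is the number of set partitions of an m-element set all of whose blocks have size greater than j. -/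
open Finset

/-- The `n`-th Bell number: the number of set partitions of an `n`-element set. -/
noncomputable def Bell (n : ℕ) : ℕ :=
  Nat.card (Finpartition (Finset.univ : Finset (Fin n)))

/-- `Brough m j` is the number of set partitions of an `m`-element set all of whose
blocks have size strictly greater than `j` (so `Brough 0 j = 1`). -/
noncomputable def Brough (m j : ℕ) : ℕ :=
  Nat.card {P : Finpartition (Finset.univ : Finset (Fin m)) // ∀ p ∈ P.parts, j < p.card}

/-- A set partition of `Fin n` is practical if every integer from `0` to `n`
is a sum of the sizes of some subset of its blocks. -/
def IsPractical {n : ℕ} (P : Finpartition (Finset.univ : Finset (Fin n))) : Prop :=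
  ∀ k ≤ n, ∃ t ⊆ P.parts, ∑ p ∈ t, p.card = k

/-- `PP n` is the number of practical set partitions of an `n`-element set. -/
noncomputable def PP (n : ℕ) : ℕ :=
  Nat.card {P : Finpartition (Finset.univ : Finset (Fin n)) // IsPractical P}

namespace BellAux

variable {α β : Type*} [DecidableEq α] [DecidableEq β]

/-! ### Completeness extension lemma -/

lemma cover_extend (s : ℕ) (F G : Finset (Finset α)) (hFG : Disjoint F G)
    (hF : ∀ b ∈ F, b.card ≤ s + 1)
    (hG : ∀ j ≤ s, ∃ u ⊆ G, ∑ p ∈ u, p.card = j) :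
    ∀ j ≤ s + ∑ b ∈ F, b.card, ∃ u ⊆ G ∪ F, ∑ p ∈ u, p.card = j := by
  induction F using Finset.induction_on with
  | empty =>
      intro j hj
      simp only [sum_empty, add_zero] at hj
      obtain ⟨u, hu, hsum⟩ := hG j hj
      exact ⟨u, hu.trans (subset_union_left), hsum⟩
  | @insert a F' ha ih =>
      intro j hj
      have hFG' : Disjoint F' G := (hFG.mono_left (subset_insert a F'))
      have hF' : ∀ b ∈ F', b.card ≤ s + 1 := fun b hb => hF b (mem_insert_of_mem hb)
      by_cases hj' : j ≤ s + ∑ b ∈ F', b.card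
      · obtain ⟨u, hu, hsum⟩ := ih hFG' hF' j hj'
        exact ⟨u, hu.trans (union_subset_union_right (subset_insert a F')), hsum⟩
      · push_neg at hj'
        have hcard : a.card ≤ j := by
          have := hF a (mem_insert_self a F')
          omega
        have hj2 : j - a.card ≤ s + ∑ b ∈ F', b.card := by
          rw [sum_insert ha] at hj
          omega
        obtain ⟨u, hu, hsum⟩ := ih hFG' hF' (j - a.card) hj2
        have hau : a ∉ u := by
          intro hmem
          rcases mem_union.1 (hu hmem) with h | h
          · exact (Finset.disjoint_right.1 hFG h) (mem_insert_self a F')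
          · exact ha h
        refine ⟨insert a u, ?_, ?_⟩
        · intro x hx
          rcases mem_insert.1 hx with rfl | hx
          · exact mem_union_right _ (mem_insert_self _ F')
          · exact (union_subset_union_right (subset_insert a F')) (hu hx)
        · rw [sum_insert hau, hsum]
          omega

/-! ### Mapping finpartitions along embeddings -/

/-- Map a finpartition of `s` along an embedding. -/
def mapEmb (f : α ↪ β) {s : Finset α} (P : Finpartition s) : Finpartition (s.map f) where
  parts := P.parts.map (Finset.mapEmbedding f).toEmbedding
  supIndep := by
    rw [Finset.supIndep_iff_pairwiseDisjoint]
    rintro x hx y hy hxy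
    simp only [coe_map, Set.mem_image, mem_coe, RelEmbedding.coe_toEmbedding,
      mapEmbedding_apply] at hx hy
    obtain ⟨a, ha, rfl⟩ := hx
    obtain ⟨b, hb, rfl⟩ := hy
    have hab : a ≠ b := fun h => hxy (by rw [h])
    exact (Finset.disjoint_map f).2
      (P.supIndep.pairwiseDisjoint ha hb hab)
  sup_parts := by
    ext x
    simp only [mem_sup, mem_map, RelEmbedding.coe_toEmbedding, mapEmbedding_apply, id]
    constructor
    · rintro ⟨b, ⟨a, ha, rfl⟩, hx⟩
      rw [mem_map] at hx
      obtain ⟨y, hy, rfl⟩ := hx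
      exact ⟨y, by rw [← P.sup_parts]; exact (mem_sup).2 ⟨a, ha, hy⟩, rfl⟩
    · rintro ⟨y, hy, rfl⟩
      rw [← P.sup_parts, mem_sup] at hy
      obtain ⟨a, ha, hy⟩ := hy
      exact ⟨a.map f, ⟨a, ha, rfl⟩, mem_map_of_mem f hy⟩
  bot_notMem := by
    simp only [bot_eq_empty, mem_map, RelEmbedding.coe_toEmbedding, mapEmbedding_apply]
    rintro ⟨a, ha, h⟩
    rw [Finset.map_eq_empty] at h
    exact P.bot_notMem (by rw [bot_eq_empty, ← h]; exact ha)

lemma mapEmb_parts (f : α ↪ β) {s : Finset α} (P : Finpartition s) :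
    (mapEmb f P).parts = P.parts.map (Finset.mapEmbedding f).toEmbedding := rfl

lemma mapEmb_bijective (f : α ↪ β) (s : Finset α) :
    Function.Bijective (mapEmb f (s := s)) := by
  constructor
  · intro P Q h
    have := congrArg Finpartition.parts h
    rw [mapEmb_parts, mapEmb_parts] at this
    exact Finpartition.ext (Finset.map_injective _ this)
  · intro P'
    have hpre : ∀ b ∈ P'.parts, (b.preimage f f.injective.injOn).map f = b := by
      intro b hb
      have hbs : b ⊆ s.map f := P'.le hb
      ext x
      simp only [mem_map, mem_preimage]
      constructor
      · rintro ⟨y, hy, rfl⟩; exact hy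
      · intro hx
        obtain ⟨y, _, rfl⟩ := mem_map.1 (hbs hx)
        exact ⟨y, hx, rfl⟩
    refine ⟨⟨P'.parts.image (fun b => b.preimage f f.injective.injOn), ?_, ?_, ?_⟩, ?_⟩
    · rw [Finset.supIndep_iff_pairwiseDisjoint]
      rintro x hx y hy hxy
      simp only [coe_image, Set.mem_image, mem_coe] at hx hy
      obtain ⟨b, hb, rfl⟩ := hx
      obtain ⟨c, hc, rfl⟩ := hy
      have hbc : b ≠ c := fun h => hxy (by rw [h])
      have hd : Disjoint b c := P'.supIndep.pairwiseDisjoint hb hc hbc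
      show Disjoint (b.preimage f f.injective.injOn) (c.preimage f f.injective.injOn)
      rw [Finset.disjoint_left]
      intro x hxb hxc
      rw [mem_preimage] at hxb hxc
      exact (Finset.disjoint_left.1 hd) hxb hxc
    · ext x
      simp only [mem_sup, mem_image, id]
      constructor
      · rintro ⟨u, ⟨b, hb, rfl⟩, hx⟩
        rw [mem_preimage] at hx
        have : f x ∈ s.map f := by rw [← P'.sup_parts]; exact mem_sup.2 ⟨b, hb, hx⟩
        obtain ⟨y, hy, hyx⟩ := mem_map.1 this
        rwa [← f.injective hyx]
      · intro hx
        have : f x ∈ s.map f := mem_map_of_mem f hx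
        rw [← P'.sup_parts, mem_sup] at this
        obtain ⟨b, hb, hfb⟩ := this
        exact ⟨_, ⟨b, hb, rfl⟩, mem_preimage.2 hfb⟩
    · simp only [bot_eq_empty, mem_image]
      rintro ⟨b, hb, h⟩
      have := hpre b hb
      rw [h, Finset.map_empty] at this
      exact P'.bot_notMem (by rw [bot_eq_empty, this]; exact hb)
    · apply Finpartition.ext
      rw [mapEmb_parts]
      ext b
      simp only [mem_map, mem_image, RelEmbedding.coe_toEmbedding, mapEmbedding_apply]
      constructor
      · rintro ⟨u, ⟨c, hc, rfl⟩, rfl⟩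
        rwa [hpre c hc]
      · intro hb
        exact ⟨b.preimage f f.injective.injOn, ⟨b, hb, rfl⟩, hpre b hb⟩

lemma mapEmb_sums (f : α ↪ β) {s : Finset α} (P : Finpartition s) (j : ℕ) :
    (∃ u ⊆ (mapEmb f P).parts, ∑ p ∈ u, p.card = j) ↔
      (∃ u ⊆ P.parts, ∑ p ∈ u, p.card = j) := by
  rw [mapEmb_parts]
  constructor
  · rintro ⟨u, hu, hsum⟩
    obtain ⟨v, hv, rfl⟩ := Finset.subset_map_iff.1 hu
    refine ⟨v, hv, ?_⟩
    rw [Finset.sum_map] at hsum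
    simpa only [RelEmbedding.coe_toEmbedding, mapEmbedding_apply, card_map] using hsum
  · rintro ⟨u, hu, hsum⟩
    refine ⟨u.map (Finset.mapEmbedding f).toEmbedding, Finset.map_subset_map.2 hu, ?_⟩
    rw [Finset.sum_map]
    simpa only [RelEmbedding.coe_toEmbedding, mapEmbedding_apply, card_map]

lemma mapEmb_card_parts (f : α ↪ β) {s : Finset α} (P : Finpartition s) (c : ℕ) :
    (∀ p ∈ (mapEmb f P).parts, c < p.card) ↔ (∀ p ∈ P.parts, c < p.card) := by
  rw [mapEmb_parts]
  simp only [mem_map, RelEmbedding.coe_toEmbedding, mapEmbedding_apply]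
  constructor
  · intro h p hp
    simpa using h (p.map f) ⟨p, hp, rfl⟩
  · rintro h p ⟨a, ha, rfl⟩
    simpa using h a ha

/-- equivalence by `copy` -/
def copyEquiv {a b : Finset α} (h : a = b) : Finpartition a ≃ Finpartition b where
  toFun P := P.copy h
  invFun P := P.copy h.symm
  left_inv P := Finpartition.ext rfl
  right_inv P := Finpartition.ext rfl

lemma exists_emb {n : ℕ} (T : Finset (Fin n)) :
    ∃ f : Fin T.card ↪ Fin n, (Finset.univ : Finset (Fin T.card)).map f = T := by
  have e := T.orderIsoOfFin rfl
  refine ⟨⟨fun i => (e i : Fin n), fun i j h => e.injective (Subtype.coe_injective h)⟩, ?_⟩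
  ext x
  simp only [mem_map, mem_univ, true_and, Function.Embedding.coeFn_mk]
  constructor
  · rintro ⟨i, rfl⟩; exact (e i).2
  · intro hx; exact ⟨e.symm ⟨x, hx⟩, by show ((e (e.symm ⟨x, hx⟩) : Fin n)) = x; rw [OrderIso.apply_symm_apply]⟩

lemma card_prac {n : ℕ} (T : Finset (Fin n)) :
    Nat.card {Q : Finpartition T // ∀ j ≤ T.card, ∃ u ⊆ Q.parts, ∑ p ∈ u, p.card = j}
      = PP T.card := by
  obtain ⟨f, hf⟩ := exists_emb T
  set e : Finpartition (Finset.univ : Finset (Fin T.card)) ≃ Finpartition T :=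
    (Equiv.ofBijective _ (mapEmb_bijective f Finset.univ)).trans (copyEquiv hf) with he
  have hparts : ∀ P, (e P).parts = (mapEmb f P).parts := fun P => rfl
  have key : ∀ P : Finpartition (Finset.univ : Finset (Fin T.card)),
      IsPractical P ↔ ∀ j ≤ T.card, ∃ u ⊆ (e P).parts, ∑ p ∈ u, p.card = j := by
    intro P
    unfold IsPractical
    constructor
    · intro h j hj
      rw [hparts]
      exact (mapEmb_sums f P j).mpr (h j hj)
    · intro h j hj
      exact (mapEmb_sums f P j).mp (by rw [← hparts]; exact h j hj)
  rw [PP]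
  exact (Nat.card_congr (Equiv.subtypeEquiv e key)).symm

lemma card_rough {n : ℕ} (T : Finset (Fin n)) (c : ℕ) :
    Nat.card {R : Finpartition T // ∀ p ∈ R.parts, c < p.card} = Brough T.card c := by
  obtain ⟨f, hf⟩ := exists_emb T
  set e : Finpartition (Finset.univ : Finset (Fin T.card)) ≃ Finpartition T :=
    (Equiv.ofBijective _ (mapEmb_bijective f Finset.univ)).trans (copyEquiv hf) with he
  have hparts : ∀ P, (e P).parts = (mapEmb f P).parts := fun P => rfl
  have key : ∀ P : Finpartition (Finset.univ : Finset (Fin T.card)),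
      (∀ p ∈ P.parts, c < p.card) ↔ ∀ p ∈ (e P).parts, c < p.card := by
    intro P
    rw [hparts]
    exact (mapEmb_card_parts f P c).symm
  rw [Brough]
  exact (Nat.card_congr (Equiv.subtypeEquiv e key)).symm

/-! ### The canonical decomposition of a partition -/

variable {n : ℕ}

/-- the parts of size at most `c` -/
def sparts (P : Finpartition (Finset.univ : Finset (Fin n))) (c : ℕ) : Finset (Finset (Fin n)) :=
  P.parts.filter (fun b => b.card ≤ c)

/-- total size of small parts -/
def gfun (P : Finpartition (Finset.univ : Finset (Fin n))) (c : ℕ) : ℕ :=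
  ∑ b ∈ sparts P c, b.card

/-- iteration towards the least fixed point -/
def mseq (P : Finpartition (Finset.univ : Finset (Fin n))) : ℕ → ℕ
  | 0 => 0
  | t + 1 => gfun P (mseq P t + 1)

/-- the canonical size of the practical piece -/
def kfn (P : Finpartition (Finset.univ : Finset (Fin n))) : ℕ := mseq P n

/-- the underlying set of the practical piece -/
def SP (P : Finpartition (Finset.univ : Finset (Fin n))) : Finset (Fin n) :=
  (sparts P (kfn P + 1)).sup id

lemma gfun_mono (P : Finpartition (Finset.univ : Finset (Fin n))) {c c' : ℕ} (h : c ≤ c') :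
    gfun P c ≤ gfun P c' :=
  sum_le_sum_of_subset (monotone_filter_right _ (fun b _ hb => le_trans hb h))

lemma gfun_le (P : Finpartition (Finset.univ : Finset (Fin n))) (c : ℕ) : gfun P c ≤ n := by
  calc gfun P c ≤ ∑ b ∈ P.parts, b.card := sum_le_sum_of_subset (filter_subset _ _)
  _ = n := by rw [Finpartition.sum_card_parts]; simp

lemma mseq_mono (P : Finpartition (Finset.univ : Finset (Fin n))) : Monotone (mseq P) := by
  apply monotone_nat_of_le_succ
  intro t
  induction t with
  | zero => exact Nat.zero_le _
  | succ t ih => exact gfun_mono P (by omega)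

lemma mseq_le (P : Finpartition (Finset.univ : Finset (Fin n))) (t : ℕ) : mseq P t ≤ n := by
  cases t with
  | zero => exact Nat.zero_le _
  | succ t => exact gfun_le P _

lemma mseq_stab (P : Finpartition (Finset.univ : Finset (Fin n))) :
    mseq P (n + 1) = mseq P n := by
  have prop : ∀ u t, t ≤ u → mseq P (t + 1) = mseq P t → mseq P (u + 1) = mseq P u := by
    intro u
    induction u with
    | zero => intro t ht h; rwa [Nat.le_zero.1 ht] at h
    | succ u ih =>
        intro t ht h
        rcases Nat.lt_or_ge t (u + 1) with h' | h'
        · have hu := ih t (by omega) h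
          calc mseq P (u + 1 + 1) = gfun P (mseq P (u + 1) + 1) := rfl
          _ = gfun P (mseq P u + 1) := by rw [hu]
          _ = mseq P (u + 1) := rfl
        · have ht' : t = u + 1 := by omega
          rwa [← ht']
  by_contra hne
  have hgrow : ∀ t, t ≤ n + 1 → t ≤ mseq P t := by
    intro t ht
    induction t with
    | zero => exact Nat.zero_le _
    | succ t ih =>
        have h1 : t ≤ mseq P t := ih (by omega)
        have h2 : mseq P (t + 1) ≠ mseq P t := by
          intro h
          exact hne (prop n t (by omega) h)
        have h3 : mseq P t ≤ mseq P (t + 1) := mseq_mono P (by omega)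
        omega
  have := hgrow (n + 1) le_rfl
  have := mseq_le P (n + 1)
  omega

lemma kfn_fix (P : Finpartition (Finset.univ : Finset (Fin n))) :
    gfun P (kfn P + 1) = kfn P := mseq_stab P

lemma cover (P : Finpartition (Finset.univ : Finset (Fin n))) :
    ∀ t, ∀ j ≤ mseq P (t + 1), ∃ u ⊆ sparts P (mseq P t + 1), ∑ p ∈ u, p.card = j := by
  intro t
  induction t with
  | zero =>
      have h := cover_extend (α := Fin n) 0 (sparts P 1) ∅ (disjoint_empty_right _)
        (fun b hb => by simpa using (mem_filter.1 hb).2)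
        (fun j hj => ⟨∅, empty_subset _, by simpa using (Nat.le_zero.1 hj).symm⟩)
      intro j hj
      obtain ⟨u, hu, hsum⟩ := h j (by have hj' : j ≤ gfun P 1 := hj; simpa [gfun] using hj')
      exact ⟨u, by simpa [mseq] using hu, hsum⟩
  | succ t ih =>
      intro j hj
      set G := sparts P (mseq P t + 1) with hG
      set F := sparts P (mseq P (t + 1) + 1) \ G with hF
      have hGsub : G ⊆ sparts P (mseq P (t + 1) + 1) :=
        monotone_filter_right _ (fun b hb => by
          have := mseq_mono P (show t ≤ t + 1 by omega); omega)
      have hunion : G ∪ F = sparts P (mseq P (t + 1) + 1) := by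
        rw [hF, union_sdiff_of_subset hGsub]
      have hsumF : mseq P (t + 1) + ∑ b ∈ F, b.card = mseq P (t + 1 + 1) := by
        have h1 : ∑ b ∈ F, b.card + ∑ b ∈ G, b.card
            = ∑ b ∈ sparts P (mseq P (t + 1) + 1), b.card := sum_sdiff hGsub
        have h2 : ∑ b ∈ G, b.card = mseq P (t + 1) := rfl
        have h3 : ∑ b ∈ sparts P (mseq P (t + 1) + 1), b.card = mseq P (t + 1 + 1) := rfl
        omega
      have h := cover_extend (mseq P (t + 1)) F G sdiff_disjoint
        (fun b hb => by
          have := (mem_filter.1 (mem_sdiff.1 hb).1).2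
          omega)
        ih
      obtain ⟨u, hu, hsum⟩ := h j (by omega)
      exact ⟨u, by rwa [hunion] at hu, hsum⟩

lemma cover_kfn (P : Finpartition (Finset.univ : Finset (Fin n))) :
    ∀ j ≤ kfn P, ∃ u ⊆ sparts P (kfn P + 1), ∑ p ∈ u, p.card = j := by
  intro j hj
  have := cover P n j (by rw [mseq_stab P] at *; exact hj)
  exact this

lemma card_sup_parts (P : Finpartition (Finset.univ : Finset (Fin n)))
    {A : Finset (Finset (Fin n))} (hA : A ⊆ P.parts) :
    (A.sup id).card = ∑ b ∈ A, b.card := by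
  rw [sup_eq_biUnion]
  exact card_biUnion (fun x hx y hy hxy =>
    P.supIndep.pairwiseDisjoint (hA hx) (hA hy) hxy)

lemma card_SP (P : Finpartition (Finset.univ : Finset (Fin n))) : (SP P).card = kfn P := by
  rw [SP, card_sup_parts P (show sparts P (kfn P + 1) ⊆ P.parts from filter_subset _ _)]
  exact kfn_fix P

lemma sup_large (P : Finpartition (Finset.univ : Finset (Fin n))) :
    (P.parts.filter (fun b => ¬ b.card ≤ kfn P + 1)).sup id = (SP P)ᶜ := by
  have hdisj : Disjoint (SP P) ((P.parts.filter (fun b => ¬ b.card ≤ kfn P + 1)).sup id) := by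
    rw [SP, Finset.disjoint_sup_left]
    intro b hb
    rw [Finset.disjoint_sup_right]
    intro c hc
    have hb' := mem_filter.1 hb
    have hc' := mem_filter.1 hc
    have hbc : b ≠ c := by
      intro h
      exact hc'.2 (h ▸ hb'.2)
    exact P.supIndep.pairwiseDisjoint hb'.1 hc'.1 hbc
  have hsup : SP P ⊔ (P.parts.filter (fun b => ¬ b.card ≤ kfn P + 1)).sup id = univ := by
    rw [SP, sparts, ← sup_union, filter_union_filter_not_eq, P.sup_parts]
  have : IsCompl (SP P) ((P.parts.filter (fun b => ¬ b.card ≤ kfn P + 1)).sup id) :=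
    ⟨hdisj, codisjoint_iff.2 (by rw [hsup]; rfl)⟩
  exact this.symm.eq_compl

/-- the partition restricted to the small parts -/
def QP (P : Finpartition (Finset.univ : Finset (Fin n))) : Finpartition (SP P) :=
  P.ofSubset (filter_subset _ _) rfl

/-- the partition restricted to the large parts -/
def RP (P : Finpartition (Finset.univ : Finset (Fin n))) : Finpartition ((SP P)ᶜ) :=
  P.ofSubset (filter_subset _ _) (sup_large P)

lemma QP_parts (P : Finpartition (Finset.univ : Finset (Fin n))) :
    (QP P).parts = sparts P (kfn P + 1) := rfl

lemma RP_parts (P : Finpartition (Finset.univ : Finset (Fin n))) :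
    (RP P).parts = P.parts.filter (fun b => ¬ b.card ≤ kfn P + 1) := rfl

/-! ### The fiber bijection -/

/-- decomposition map on the fiber over `S` -/
def fib (S : Finset (Fin n)) :
    {P : Finpartition (Finset.univ : Finset (Fin n)) // SP P = S} →
      {Q : Finpartition S // ∀ j ≤ S.card, ∃ u ⊆ Q.parts, ∑ p ∈ u, p.card = j} ×
      {R : Finpartition Sᶜ // ∀ p ∈ R.parts, S.card + 1 < p.card} :=
  fun ⟨P, hP⟩ =>
    (⟨(QP P).copy hP, by
        intro j hj
        rw [show ((QP P).copy hP).parts = (QP P).parts from rfl, QP_parts]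
        apply cover_kfn P
        calc j ≤ S.card := hj
        _ = kfn P := by rw [← hP, card_SP]⟩,
     ⟨(RP P).copy (by rw [hP]), by
        intro p hp
        have hp' : p ∈ P.parts.filter (fun b => ¬ b.card ≤ kfn P + 1) := hp
        have h2 := (mem_filter.1 hp').2
        have h3 : S.card = kfn P := by rw [← hP, card_SP]
        omega⟩)

lemma fib_bijective (S : Finset (Fin n)) : Function.Bijective (fib S) := by
  constructor
  · rintro ⟨P, hP⟩ ⟨P', hP'⟩ h
    have h1 := congrArg (fun z => ((z.1 : Finpartition S).parts : Finset (Finset (Fin n)))) h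
    have h2 := congrArg (fun z => ((z.2 : Finpartition Sᶜ).parts : Finset (Finset (Fin n)))) h
    have h1' : sparts P (kfn P + 1) = sparts P' (kfn P' + 1) := h1
    have h2' : P.parts.filter (fun b => ¬ b.card ≤ kfn P + 1)
        = P'.parts.filter (fun b => ¬ b.card ≤ kfn P' + 1) := h2
    apply Subtype.ext
    apply Finpartition.ext
    calc P.parts = sparts P (kfn P + 1) ∪ P.parts.filter (fun b => ¬ b.card ≤ kfn P + 1) :=
          (filter_union_filter_not_eq _ _).symm
    _ = sparts P' (kfn P' + 1) ∪ P'.parts.filter (fun b => ¬ b.card ≤ kfn P' + 1) := by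
          rw [h1', h2']
    _ = P'.parts := filter_union_filter_not_eq _ _
  · rintro ⟨⟨Q1, hQ⟩, ⟨R1, hR⟩⟩
    have hQle : ∀ b ∈ Q1.parts, b.card ≤ S.card := fun b hb => card_le_card (Q1.le hb)
    set comb : Finpartition (Finset.univ : Finset (Fin n)) :=
      { parts := Q1.parts ∪ R1.parts
        supIndep := by
          rw [Finset.supIndep_iff_pairwiseDisjoint]
          rintro x hx y hy hxy
          simp only [coe_union, Set.mem_union, mem_coe] at hx hy
          have hd : ∀ a ∈ Q1.parts, ∀ b ∈ R1.parts, Disjoint a b := by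
            intro a ha b hb
            exact Finset.disjoint_of_subset_left (Q1.le ha)
              (Finset.disjoint_of_subset_right (R1.le hb) disjoint_compl_right)
          rcases hx with hx | hx <;> rcases hy with hy | hy
          · exact Q1.supIndep.pairwiseDisjoint hx hy hxy
          · exact hd x hx y hy
          · exact (hd y hy x hx).symm
          · exact R1.supIndep.pairwiseDisjoint hx hy hxy
        sup_parts := by
          rw [sup_union, Q1.sup_parts, R1.sup_parts, sup_eq_union, union_compl]
        bot_notMem := by
          rw [mem_union]
          rintro (h | h)
          · exact Q1.bot_notMem h
          · exact R1.bot_notMem h } with hcomb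
    have hsparts : sparts comb (S.card + 1) = Q1.parts := by
      ext b
      simp only [sparts, mem_filter, hcomb, mem_union]
      constructor
      · rintro ⟨hb | hb, hc⟩
        · exact hb
        · exact absurd hc (by have := hR b hb; omega)
      · intro hb
        exact ⟨Or.inl hb, by have := hQle b hb; omega⟩
    have hg : gfun comb (S.card + 1) = S.card := by
      rw [gfun, hsparts, Q1.sum_card_parts]
    have hmle : ∀ t, mseq comb t ≤ S.card := by
      intro t
      induction t with
      | zero => exact Nat.zero_le _
      | succ t ih =>
          calc mseq comb (t + 1) = gfun comb (mseq comb t + 1) := rfl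
          _ ≤ gfun comb (S.card + 1) := gfun_mono comb (by omega)
          _ = S.card := hg
    have hfix := kfn_fix comb
    have hk : kfn comb = S.card := by
      by_contra hne
      have hlt : kfn comb < S.card := lt_of_le_of_ne (hmle n) hne
      obtain ⟨u, hu, hsum⟩ := hQ (kfn comb + 1) (by omega)
      have husub : u ⊆ sparts comb (kfn comb + 1) := by
        intro b hb
        rw [sparts, mem_filter]
        refine ⟨by rw [hcomb]; exact mem_union_left _ (hu hb), ?_⟩
        calc b.card ≤ ∑ p ∈ u, p.card := single_le_sum (fun i _ => Nat.zero_le _) hb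
        _ = kfn comb + 1 := hsum
      have hle : ∑ p ∈ u, p.card ≤ gfun comb (kfn comb + 1) := sum_le_sum_of_subset husub
      rw [hsum, hfix] at hle
      omega
    have hsp1 : sparts comb (kfn comb + 1) = Q1.parts := by rw [hk]; exact hsparts
    have hsp : SP comb = S := by rw [SP, hsp1, Q1.sup_parts]
    have hlargeeq : comb.parts.filter (fun b => ¬ b.card ≤ kfn comb + 1) = R1.parts := by
      ext b
      rw [mem_filter]
      constructor
      · rintro ⟨hb, hc⟩
        rcases mem_union.1 (show b ∈ Q1.parts ∪ R1.parts from hb) with hb' | hb'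
        · exact absurd (by have := hQle b hb'; omega : b.card ≤ kfn comb + 1) hc
        · exact hb'
      · intro hb
        refine ⟨by rw [hcomb]; exact mem_union_right _ hb, ?_⟩
        have := hR b hb
        omega
    refine ⟨⟨comb, hsp⟩, ?_⟩
    apply Prod.ext
    · apply Subtype.ext
      apply Finpartition.ext
      exact hsp1
    · apply Subtype.ext
      apply Finpartition.ext
      exact hlargeeq

lemma fiber_card (S : Finset (Fin n)) :
    Nat.card {P : Finpartition (Finset.univ : Finset (Fin n)) // SP P = S}
      = PP S.card * Brough (Sᶜ.card) (S.card + 1) := by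
  rw [Nat.card_congr (Equiv.ofBijective _ (fib_bijective S)), Nat.card_prod,
    card_prac S, card_rough Sᶜ (S.card + 1)]

end BellAux

/-- `B_n = ∑_{k=0}^n C(n,k) · P_k · B_{n−k, k+1}`. -/
theorem bell_eq_sum_practical_rough (n : ℕ) :
    Bell n = ∑ k ∈ Finset.range (n + 1), n.choose k * PP k * Brough (n - k) (k + 1) := by
  classical
  have h1 : Bell n = ∑ S : Finset (Fin n),
      Nat.card {P : Finpartition (Finset.univ : Finset (Fin n)) // BellAux.SP P = S} := by
    rw [Bell, Nat.card_eq_fintype_card, ← card_univ,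
      Finset.card_eq_sum_card_fiberwise (f := BellAux.SP (n := n)) (t := Finset.univ)
        (fun x _ => mem_univ _)]
    apply Finset.sum_congr rfl
    intro S _
    rw [Nat.card_eq_fintype_card, Fintype.card_subtype]
  have h2 : ∀ S : Finset (Fin n),
      Nat.card {P : Finpartition (Finset.univ : Finset (Fin n)) // BellAux.SP P = S}
        = PP S.card * Brough (n - S.card) (S.card + 1) := by
    intro S
    rw [BellAux.fiber_card S, Finset.card_compl, Fintype.card_fin]
  have h3 := Finset.sum_powerset_apply_card
    (fun k => PP k * Brough (n - k) (k + 1)) (x := (Finset.univ : Finset (Fin n)))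
  rw [powerset_univ] at h3
  simp only [card_univ, Fintype.card_fin, smul_eq_mul] at h3
  rw [h1]
  calc (∑ S : Finset (Fin n),
        Nat.card {P : Finpartition (Finset.univ : Finset (Fin n)) // BellAux.SP P = S})
      = ∑ S : Finset (Fin n), PP S.card * Brough (n - S.card) (S.card + 1) :=
        Finset.sum_congr rfl (fun S _ => h2 S)
    _ = ∑ k ∈ Finset.range (n + 1), n.choose k * (PP k * Brough (n - k) (k + 1)) := h3
    _ = ∑ k ∈ Finset.range (n + 1), n.choose k * PP k * Brough (n - k) (k + 1) := by
        apply Finset.sum_congr rfl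
        intro k _
        ring
end

section
/- For n ≥ 1, the number I_n of impractical set partitions of an n-element set satisfies I_n = B_{n,1} + Σ_{k=1}^{⌊(n−2)/2⌋} C(n,k) · P_k · B_{n−k, k+1}. -/
open Finset

/-- The number of impractical set partitions of an `n`-element set. -/
noncomputable def Impr (n : ℕ) : ℕ := Bell n - PP n

/-! ### Auxiliary material -/

section Aux
set_option linter.unusedSectionVars false

lemma msum_le {N M : Multiset ℕ} (h : N ≤ M) : N.sum ≤ M.sum := by
  obtain ⟨D, rfl⟩ := Multiset.le_iff_exists_add.mp h
  simp

lemma list_complete : ∀ (l : List ℕ), (∀ pre c post, l = pre ++ c :: post → c ≤ 1 + pre.sum) →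
    ∀ j ≤ l.sum, ∃ t : List ℕ, t.Sublist l ∧ t.sum = j := by
  intro l
  induction l using List.reverseRecOn with
  | nil => intro _ j hj; exact ⟨[], List.Sublist.refl _, (Nat.le_zero.1 (by simpa using hj)).symm ▸ rfl⟩
  | append_singleton l c ih =>
    intro h j hj
    have hc : c ≤ 1 + l.sum := h l c [] rfl
    have hl : ∀ pre c' post, l = pre ++ c' :: post → c' ≤ 1 + pre.sum := by
      intro pre c' post he
      refine h pre c' (post ++ [c]) ?_
      simp [he]
    rcases le_or_gt j l.sum with hle | hgt
    · obtain ⟨t, ht, hts⟩ := ih hl j hle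
      exact ⟨t, ht.trans (List.sublist_append_left _ _), hts⟩
    · have hjs : j ≤ l.sum + c := by simpa using hj
      obtain ⟨t, ht, hts⟩ := ih hl (j - c) (by omega)
      refine ⟨t ++ [c], ht.append (List.Sublist.refl _), ?_⟩
      simp [hts]
      omega

lemma exists_le_map {α β : Type*} {f : α → β} :
    ∀ {N : Multiset β} {M : Multiset α}, N ≤ M.map f → ∃ M' ≤ M, M'.map f = N := by
  classical
  intro N
  induction N using Multiset.induction_on with
  | empty => exact fun _ => ⟨0, zero_le, by simp⟩
  | cons a N ih =>
    intro M h
    have ha : a ∈ M.map f := Multiset.mem_of_le h (Multiset.mem_cons_self _ _)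
    obtain ⟨x, hx, rfl⟩ := Multiset.mem_map.1 ha
    have h2 : N ≤ (M.erase x).map f := by
      rw [Multiset.map_erase_of_mem _ _ hx]
      have := Multiset.erase_le_erase (f x) h
      simpa using this
    obtain ⟨M', hM', hmap⟩ := ih h2
    refine ⟨x ::ₘ M', ?_, by simp [hmap]⟩
    calc x ::ₘ M' ≤ x ::ₘ M.erase x := Multiset.cons_le_cons _ hM'
    _ = M := Multiset.cons_erase hx

lemma multiset_key (k : ℕ) (S : Multiset ℕ)
    (h1 : ∀ j ≤ k, ∃ N ≤ S, N.sum = j) (h2 : ∀ c ∈ S, c ≤ k)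
    (h3 : ¬ ∃ N ≤ S, N.sum = k + 1) : S.sum ≤ k := by
  by_contra hgt
  push_neg at hgt
  set l := Multiset.sort S (· ≤ ·) with hldef
  have hlS : (l : Multiset ℕ) = S := Multiset.sort_eq _ _
  have hsorted : l.Pairwise (· ≤ ·) := Multiset.pairwise_sort _ _
  have hsum : l.sum = S.sum := by rw [← Multiset.sum_coe, hlS]
  have hcomp : ∀ pre c post, l = pre ++ c :: post → c ≤ 1 + pre.sum := by
    intro pre c post he
    by_contra hc
    push_neg at hc
    have hcS : c ∈ S := by rw [← hlS]; exact Multiset.mem_coe.2 (by simp [he])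
    have hck : c ≤ k := h2 c hcS
    obtain ⟨N, hNS, hNsum⟩ := h1 (pre.sum + 1) (by omega)
    have hmem : ∀ x ∈ N, x < c := by
      intro x hx
      have hxle : x ≤ N.sum := msum_le (Multiset.singleton_le.2 hx)
      omega
    have hpostge : ∀ x ∈ post, c ≤ x := by
      have hs := hsorted
      rw [he] at hs
      have h2' := (List.pairwise_append.mp hs).2.1
      exact (List.pairwise_cons.mp h2').1
    have hNpre : N ≤ (pre : Multiset ℕ) := by
      rw [Multiset.le_iff_count]
      intro x
      by_cases hx : x ∈ N
      · have hxc := hmem x hx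
        have h₁ : Multiset.count x N ≤ Multiset.count x S := Multiset.count_le_of_le x hNS
        rw [← hlS, he] at h₁
        have hsplit : ((pre ++ c :: post : List ℕ) : Multiset ℕ) =
            (pre : Multiset ℕ) + ((c :: post : List ℕ) : Multiset ℕ) := by simp
        rw [hsplit, Multiset.count_add] at h₁
        have hzero : Multiset.count x ((c :: post : List ℕ) : Multiset ℕ) = 0 := by
          rw [Multiset.count_eq_zero]
          simp only [Multiset.mem_coe, List.mem_cons]
          rintro (rfl | hxp)
          · omega
          · exact absurd (hpostge x hxp) (by omega)
        omega
      · simp [Multiset.count_eq_zero_of_notMem hx]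
    have : N.sum ≤ pre.sum := by
      have := msum_le hNpre
      simpa using this
    omega
  obtain ⟨t, htl, hts⟩ := list_complete l hcomp (k + 1) (by omega)
  refine h3 ⟨(t : Multiset ℕ), ?_, by simpa using hts⟩
  rw [← hlS]
  exact Multiset.coe_le.mpr htl.subperm

variable {α β : Type*} [DecidableEq α] [DecidableEq β]

/-- Map a finpartition along an embedding. -/
def partMap (f : α ↪ β) {s : Finset α} (P : Finpartition s) : Finpartition (s.map f) where
  parts := P.parts.image fun p => p.map f
  supIndep := by
    rw [Finset.supIndep_iff_pairwiseDisjoint]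
    rintro p hp q hq hne
    simp only [coe_image, Set.mem_image, mem_coe] at hp hq
    obtain ⟨p', hp', rfl⟩ := hp
    obtain ⟨q', hq', rfl⟩ := hq
    have hne' : p' ≠ q' := by rintro rfl; exact hne rfl
    have hd := P.disjoint hp' hq' hne'
    simpa only [Function.onFun, id] using (Finset.disjoint_map f).2 hd
  sup_parts := by
    ext x
    simp only [Finset.mem_sup, Finset.mem_image, Finset.mem_map]
    constructor
    · rintro ⟨q, ⟨p, hp, rfl⟩, hx⟩
      obtain ⟨a, ha, rfl⟩ := Finset.mem_map.1 hx
      exact ⟨a, by rw [← P.sup_parts]; exact Finset.mem_sup.2 ⟨p, hp, ha⟩, rfl⟩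
    · rintro ⟨a, ha, rfl⟩
      rw [← P.sup_parts] at ha
      obtain ⟨p, hp, hap⟩ := Finset.mem_sup.1 ha
      exact ⟨p.map f, ⟨p, hp, rfl⟩, Finset.mem_map_of_mem f hap⟩
  bot_notMem := by
    simp only [Finset.bot_eq_empty, Finset.mem_image]
    rintro ⟨p, hp, hpe⟩
    have := P.nonempty_of_mem_parts hp
    rw [Finset.eq_empty_iff_forall_notMem] at hpe
    obtain ⟨x, hx⟩ := this
    exact hpe (f x) (Finset.mem_map_of_mem f hx)

lemma partMap_parts (f : α ↪ β) {s : Finset α} (P : Finpartition s) :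
    (partMap f P).parts = P.parts.image fun p => p.map f := rfl

lemma partMap_bijective (f : α ↪ β) {s : Finset α} :
    Function.Bijective (partMap f (s := s)) := by
  constructor
  · intro P Q h
    have := congrArg Finpartition.parts h
    rw [partMap_parts, partMap_parts] at this
    exact Finpartition.ext (Finset.image_injective (Finset.map_injective f) this)
  · intro W
    have hparts : ∀ q ∈ W.parts, (q.preimage f f.injective.injOn).map f = q := by
      intro q hq
      ext y
      simp only [Finset.mem_map, Finset.mem_preimage]
      constructor
      · rintro ⟨a, ha, rfl⟩; exact ha
      · intro hy
        have : y ∈ s.map f := W.le hq hy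
        obtain ⟨a, _, rfl⟩ := Finset.mem_map.1 this
        exact ⟨a, hy, rfl⟩
    refine ⟨⟨W.parts.image fun q => q.preimage f f.injective.injOn, ?_, ?_, ?_⟩, ?_⟩
    · rw [Finset.supIndep_iff_pairwiseDisjoint]
      rintro p hp q hq hne
      simp only [coe_image, Set.mem_image, mem_coe] at hp hq
      obtain ⟨p', hp', rfl⟩ := hp
      obtain ⟨q', hq', rfl⟩ := hq
      have hne' : p' ≠ q' := by rintro rfl; exact hne rfl
      have hd := W.disjoint hp' hq' hne'
      simp only [Function.onFun, id] at hd ⊢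
      rw [Finset.disjoint_left] at hd ⊢
      intro a ha ha'
      exact hd (Finset.mem_preimage.1 ha) (Finset.mem_preimage.1 ha')
    · ext x
      simp only [Finset.mem_sup, Finset.mem_image]
      constructor
      · rintro ⟨p, ⟨q, hq, rfl⟩, hx⟩
        simp only [id, Finset.mem_preimage] at hx
        have : f x ∈ s.map f := W.le hq hx
        obtain ⟨a, ha, hax⟩ := Finset.mem_map.1 this
        rwa [← f.injective hax]
      · intro hx
        have : f x ∈ s.map f := Finset.mem_map_of_mem f hx
        rw [← W.sup_parts] at this
        obtain ⟨q, hq, hfx⟩ := Finset.mem_sup.1 this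
        exact ⟨q.preimage f f.injective.injOn, ⟨q, hq, rfl⟩,
          by simpa [Finset.mem_preimage] using hfx⟩
    · simp only [Finset.bot_eq_empty, Finset.mem_image]
      rintro ⟨q, hq, hqe⟩
      have hqn := W.nonempty_of_mem_parts hq
      obtain ⟨y, hy⟩ := hqn
      have : y ∈ s.map f := W.le hq hy
      obtain ⟨a, _, rfl⟩ := Finset.mem_map.1 this
      have : a ∈ q.preimage f f.injective.injOn := Finset.mem_preimage.2 hy
      rw [hqe] at this
      exact absurd this (Finset.notMem_empty a)
    · apply Finpartition.ext
      rw [partMap_parts]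
      simp only
      rw [Finset.image_image]
      have : ((fun p => Finset.map f p) ∘ fun q : Finset β => q.preimage f f.injective.injOn) =
          fun q : Finset β => Finset.map f (q.preimage f f.injective.injOn) := rfl
      rw [this, Finset.image_congr (g := id) (fun q hq => hparts q hq), Finset.image_id]

/-- The equivalence of finpartitions along an embedding. -/
noncomputable def partEquiv (f : α ↪ β) (s : Finset α) :
    Finpartition s ≃ Finpartition (s.map f) := Equiv.ofBijective _ (partMap_bijective f)

lemma partEquiv_parts (f : α ↪ β) (s : Finset α) (P : Finpartition s) :
    (partEquiv f s P).parts = P.parts.image fun p => p.map f := rfl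

/-- copy equivalence -/
def copyEquiv {γ : Type*} [Lattice γ] [OrderBot γ] {a b : γ} (h : a = b) :
    Finpartition a ≃ Finpartition b where
  toFun P := P.copy h
  invFun P := P.copy h.symm
  left_inv P := by subst h; rfl
  right_inv P := by subst h; rfl

noncomputable def finEmb (m : ℕ) (s : Finset β) (h : s.card = m) : Fin m ↪ β :=
  (((finCongr h.symm).trans s.equivFin.symm).toEmbedding).trans (Function.Embedding.subtype _)

lemma map_finEmb (m : ℕ) (s : Finset β) (h : s.card = m) :
    (Finset.univ : Finset (Fin m)).map (finEmb m s h) = s := by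
  ext x
  simp only [Finset.mem_map, Finset.mem_univ, true_and]
  constructor
  · rintro ⟨i, rfl⟩
    exact (((finCongr h.symm).trans s.equivFin.symm) i).2
  · intro hx
    exact ⟨((finCongr h.symm).trans s.equivFin.symm).symm ⟨x, hx⟩, by
      simp [finEmb, Function.Embedding.trans]⟩

lemma sum_card_image_map (f : α ↪ β) (t : Finset (Finset α)) :
    ∑ q ∈ t.image (fun p => p.map f), q.card = ∑ p ∈ t, p.card := by
  rw [Finset.sum_image (f := Finset.card) (g := fun p => p.map f)
    (fun x _ y _ hxy => Finset.map_injective f hxy)]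
  simp

lemma reach_partEquiv_iff (f : α ↪ β) (s : Finset α) (P : Finpartition s) (j : ℕ) :
    (∃ t ⊆ (partEquiv f s P).parts, ∑ p ∈ t, p.card = j) ↔
      (∃ t ⊆ P.parts, ∑ p ∈ t, p.card = j) := by
  rw [partEquiv_parts]
  constructor
  · rintro ⟨t, hts, hsum⟩
    obtain ⟨t', ht', rfl⟩ := Finset.subset_image_iff.1 hts
    exact ⟨t', ht', by rw [← hsum, sum_card_image_map]⟩
  · rintro ⟨t, hts, hsum⟩
    exact ⟨t.image fun p => p.map f, Finset.image_subset_image hts,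
      by rw [sum_card_image_map, hsum]⟩

lemma big_partEquiv_iff (f : α ↪ β) (s : Finset α) (P : Finpartition s) (c : ℕ) :
    (∀ p ∈ (partEquiv f s P).parts, c < p.card) ↔ (∀ p ∈ P.parts, c < p.card) := by
  rw [partEquiv_parts]
  constructor
  · intro h p hp
    have := h (p.map f) (Finset.mem_image_of_mem _ hp)
    simpa using this
  · intro h q hq
    obtain ⟨p, hp, rfl⟩ := Finset.mem_image.1 hq
    simpa using h p hp

/-- full equivalence from partitions of `Fin m` to partitions of an `m`-set `s`. -/
noncomputable def fullEquiv (m : ℕ) (s : Finset β) (h : s.card = m) :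
    Finpartition (Finset.univ : Finset (Fin m)) ≃ Finpartition s :=
  (partEquiv (finEmb m s h) Finset.univ).trans (copyEquiv (map_finEmb m s h))

lemma reach_fullEquiv_iff (m : ℕ) (s : Finset β) (h : s.card = m)
    (P : Finpartition (Finset.univ : Finset (Fin m))) (j : ℕ) :
    (∃ t ⊆ (fullEquiv m s h P).parts, ∑ p ∈ t, p.card = j) ↔
      (∃ t ⊆ P.parts, ∑ p ∈ t, p.card = j) := by
  have : (fullEquiv m s h P).parts = (partEquiv (finEmb m s h) Finset.univ P).parts := rfl
  rw [this]
  exact reach_partEquiv_iff _ _ _ _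

lemma big_fullEquiv_iff (m : ℕ) (s : Finset β) (h : s.card = m)
    (P : Finpartition (Finset.univ : Finset (Fin m))) (c : ℕ) :
    (∀ p ∈ (fullEquiv m s h P).parts, c < p.card) ↔ (∀ p ∈ P.parts, c < p.card) := by
  have : (fullEquiv m s h P).parts = (partEquiv (finEmb m s h) Finset.univ P).parts := rfl
  rw [this]
  exact big_partEquiv_iff _ _ _ _

lemma card_prac_transfer (m : ℕ) (s : Finset β) (h : s.card = m) :
    Nat.card {Q : Finpartition s // ∀ j ≤ m, ∃ t ⊆ Q.parts, ∑ p ∈ t, p.card = j} =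
      Nat.card {Q : Finpartition (Finset.univ : Finset (Fin m)) //
        ∀ j ≤ m, ∃ t ⊆ Q.parts, ∑ p ∈ t, p.card = j} := by
  refine (Nat.card_congr (Equiv.subtypeEquiv (fullEquiv m s h) fun P => ?_)).symm
  constructor
  · intro hP j hj
    exact (reach_fullEquiv_iff m s h P j).2 (hP j hj)
  · intro hP j hj
    exact (reach_fullEquiv_iff m s h P j).1 (hP j hj)

lemma card_big_transfer (m : ℕ) (s : Finset β) (h : s.card = m) (c : ℕ) :
    Nat.card {Q : Finpartition s // ∀ p ∈ Q.parts, c < p.card} =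
      Nat.card {Q : Finpartition (Finset.univ : Finset (Fin m)) //
        ∀ p ∈ Q.parts, c < p.card} := by
  refine (Nat.card_congr (Equiv.subtypeEquiv (fullEquiv m s h) fun P => ?_)).symm
  exact (big_fullEquiv_iff m s h P c).symm

end Aux

section Core
attribute [local instance] Classical.propDecidable
set_option linter.unusedSectionVars false

variable {n : ℕ}

def reach (P : Finpartition (Finset.univ : Finset (Fin n))) (j : ℕ) : Prop :=
  ∃ t ⊆ P.parts, ∑ p ∈ t, p.card = j

lemma reach_zero (P : Finpartition (Finset.univ : Finset (Fin n))) : reach P 0 :=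
  ⟨∅, Finset.empty_subset _, by simp⟩

lemma sum_parts (P : Finpartition (Finset.univ : Finset (Fin n))) :
    ∑ p ∈ P.parts, p.card = n := by
  rw [P.sum_card_parts]; simp

lemma reach_le {P : Finpartition (Finset.univ : Finset (Fin n))} {j : ℕ} (h : reach P j) :
    j ≤ n := by
  obtain ⟨t, ht, rfl⟩ := h
  calc ∑ p ∈ t, p.card ≤ ∑ p ∈ P.parts, p.card := Finset.sum_le_sum_of_subset ht
  _ = n := sum_parts P

lemma practical_iff (P : Finpartition (Finset.univ : Finset (Fin n))) :
    IsPractical P ↔ ∀ j ≤ n, reach P j := Iff.rfl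

lemma reach_single {P : Finpartition (Finset.univ : Finset (Fin n))} {p : Finset (Fin n)}
    (hp : p ∈ P.parts) : reach P p.card := ⟨{p}, by simpa using hp, by simp⟩

noncomputable def key (P : Finpartition (Finset.univ : Finset (Fin n))) : ℕ :=
  if h : ∃ j, ¬ reach P j then Nat.find h - 1 else 0

variable {P : Finpartition (Finset.univ : Finset (Fin n))}

lemma find_pos (h : ∃ j, ¬ reach P j) : 0 < Nat.find h :=
  Nat.pos_of_ne_zero fun h0 => (Nat.find_spec h) (h0 ▸ reach_zero P)

lemma key_reach (h : ∃ j, ¬ reach P j) : ∀ j ≤ key P, reach P j := by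
  intro j hj
  rw [key, dif_pos h] at hj
  have : j < Nat.find h := by have := find_pos h; omega
  exact not_not.1 (Nat.find_min h this)

lemma key_not_reach (h : ∃ j, ¬ reach P j) : ¬ reach P (key P + 1) := by
  rw [key, dif_pos h]
  have := find_pos h
  have heq : Nat.find h - 1 + 1 = Nat.find h := by omega
  rw [heq]
  exact Nat.find_spec h

lemma key_eq {k : ℕ} (hr : ∀ j ≤ k, reach P j) (hnr : ¬ reach P (k + 1)) : key P = k := by
  have h : ∃ j, ¬ reach P j := ⟨k + 1, hnr⟩
  have : Nat.find h = k + 1 := by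
    rw [Nat.find_eq_iff]
    exact ⟨hnr, fun m hm => not_not.2 (hr m (by omega))⟩
  rw [key, dif_pos h, this]; omega

lemma exists_not_reach (hP : ¬ IsPractical P) : ∃ j, ¬ reach P j := by
  rw [practical_iff] at hP
  push_neg at hP
  obtain ⟨j, _, hj⟩ := hP
  exact ⟨j, hj⟩

lemma key_succ_le (hP : ¬ IsPractical P) : key P + 1 ≤ n := by
  rw [practical_iff] at hP
  push_neg at hP
  obtain ⟨j, hjn, hj⟩ := hP
  have h : ∃ j, ¬ reach P j := ⟨j, hj⟩
  have h1 : Nat.find h ≤ j := Nat.find_min' h hj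
  have := find_pos h
  rw [key, dif_pos h]
  omega

lemma one_le_card_part {p : Finset (Fin n)} (hp : p ∈ P.parts) : 1 ≤ p.card :=
  Finset.card_pos.2 (P.nonempty_of_mem_parts hp)

lemma card_part_ne (h : ∃ j, ¬ reach P j) {p : Finset (Fin n)} (hp : p ∈ P.parts) :
    p.card ≠ key P + 1 := fun hc => key_not_reach h (hc ▸ reach_single hp)

lemma big_card (h : ∃ j, ¬ reach P j) {p : Finset (Fin n)} (hp : p ∈ P.parts)
    (hb : ¬ p.card ≤ key P) : key P + 2 ≤ p.card := by
  have := card_part_ne h hp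
  omega

lemma reach_small (h : ∃ j, ¬ reach P j) :
    ∀ j ≤ key P, ∃ t ⊆ P.parts.filter (fun p => p.card ≤ key P), ∑ p ∈ t, p.card = j := by
  intro j hj
  obtain ⟨t, ht, rfl⟩ := key_reach h j hj
  refine ⟨t, fun p hp => Finset.mem_filter.2 ⟨ht hp, ?_⟩, rfl⟩
  calc p.card ≤ ∑ q ∈ t, q.card := Finset.single_le_sum (fun q _ => Nat.zero_le _) hp
  _ ≤ key P := hj

lemma sum_small_eq (h : ∃ j, ¬ reach P j) :
    ∑ p ∈ P.parts.filter (fun p => p.card ≤ key P), p.card = key P := by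
  set k := key P with hk
  set small := P.parts.filter (fun p => p.card ≤ k) with hsmall
  have hle : ∑ p ∈ small, p.card ≤ k := by
    apply multiset_key k (small.val.map Finset.card)
    · intro j hj
      obtain ⟨t, ht, hts⟩ := reach_small h j hj
      refine ⟨t.val.map Finset.card, Multiset.map_le_map (Finset.val_le_iff.2 ht), ?_⟩
      show (t.val.map Finset.card).sum = j
      rw [← hts]; rfl
    · intro c hc
      obtain ⟨p, hp, rfl⟩ := Multiset.mem_map.1 hc
      exact (Finset.mem_filter.1 hp).2
    · rintro ⟨N, hN, hNsum⟩
      obtain ⟨M', hM', hmap⟩ := exists_le_map hN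
      have hnd : M'.Nodup := Multiset.nodup_of_le hM' small.nodup
      refine key_not_reach h ⟨⟨M', hnd⟩, ?_, ?_⟩
      · intro p hp
        have : p ∈ small := Finset.mem_of_subset (Finset.val_le_iff.1 hM') hp
        exact (Finset.mem_filter.1 this).1
      · show (M'.map Finset.card).sum = k + 1
        rw [hmap, hNsum]
  have hge : k ≤ ∑ p ∈ small, p.card := by
    obtain ⟨t, ht, hts⟩ := reach_small h k le_rfl
    calc k = ∑ p ∈ t, p.card := hts.symm
    _ ≤ ∑ p ∈ small, p.card := Finset.sum_le_sum_of_subset ht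
  omega

end Core

section Core2
attribute [local instance] Classical.propDecidable
set_option linter.unusedSectionVars false

variable {n : ℕ} {P : Finpartition (Finset.univ : Finset (Fin n))}

lemma sup_filter_not (P : Finpartition (Finset.univ : Finset (Fin n)))
    (pred : Finset (Fin n) → Prop) [DecidablePred pred] :
    (P.parts.filter fun p => ¬ pred p).sup id =
      Finset.univ \ (P.parts.filter fun p => pred p).sup id := by
  have hunion : (P.parts.filter fun p => pred p).sup id ∪
      (P.parts.filter fun p => ¬ pred p).sup id = Finset.univ := by
    calc (P.parts.filter fun p => pred p).sup id ∪ (P.parts.filter fun p => ¬ pred p).sup id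
        = ((P.parts.filter fun p => pred p) ∪ (P.parts.filter fun p => ¬ pred p)).sup id :=
          (Finset.sup_union).symm
    _ = P.parts.sup id := by rw [Finset.filter_union_filter_not_eq]
    _ = Finset.univ := P.sup_parts
  have hdis : Disjoint ((P.parts.filter fun p => pred p).sup id)
      ((P.parts.filter fun p => ¬ pred p).sup id) := by
    rw [Finset.disjoint_left]
    intro x hx hx'
    obtain ⟨p, hp, hxp⟩ := Finset.mem_sup.1 hx
    obtain ⟨q, hq, hxq⟩ := Finset.mem_sup.1 hx'
    have hp' := Finset.mem_filter.1 hp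
    have hq' := Finset.mem_filter.1 hq
    have hne : p ≠ q := fun hpq => hq'.2 (hpq ▸ hp'.2)
    have hdpq : Disjoint p q := P.disjoint hp'.1 hq'.1 hne
    rw [Finset.disjoint_left] at hdpq
    exact hdpq hxp hxq
  have hres := Finset.union_sdiff_cancel_left hdis
  rw [hunion] at hres
  exact hres.symm

lemma card_sup_filter (P : Finpartition (Finset.univ : Finset (Fin n)))
    (pred : Finset (Fin n) → Prop) [DecidablePred pred] :
    ((P.parts.filter fun p => pred p).sup id).card =
      ∑ p ∈ P.parts.filter (fun p => pred p), p.card := by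
  rw [Finset.sup_eq_biUnion, Finset.card_biUnion
    (fun x hx y hy hxy => P.disjoint (Finset.mem_filter.1 hx).1 (Finset.mem_filter.1 hy).1 hxy)]
  simp

lemma card_smallA (h : ∃ j, ¬ reach P j) :
    ((P.parts.filter fun p => p.card ≤ key P).sup id).card = key P := by
  rw [card_sup_filter, sum_small_eq h]

lemma key_bound (hP : ¬ IsPractical P) : 2 * key P + 2 ≤ n := by
  have h := exists_not_reach hP
  have hkn := key_succ_le hP
  have hsplit : ∑ p ∈ P.parts.filter (fun p => p.card ≤ key P), p.card +
      ∑ p ∈ P.parts.filter (fun p => ¬ p.card ≤ key P), p.card = n := by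
    rw [Finset.sum_filter_add_sum_filter_not, sum_parts]
  rw [sum_small_eq h] at hsplit
  have hbig : (P.parts.filter fun p => ¬ p.card ≤ key P).Nonempty := by
    by_contra hemp
    rw [Finset.not_nonempty_iff_eq_empty] at hemp
    rw [hemp] at hsplit
    simp at hsplit
    omega
  obtain ⟨p, hp⟩ := hbig
  have hp' := Finset.mem_filter.1 hp
  have hcard := big_card h hp'.1 hp'.2
  have : p.card ≤ ∑ q ∈ P.parts.filter (fun q => ¬ q.card ≤ key P), q.card :=
    Finset.single_le_sum (fun q _ => Nat.zero_le _) hp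
  omega

/-- Disjoint union of two finpartitions. -/
def partUnion {γ : Type*} [DecidableEq γ] {a b c : Finset γ} (hd : Disjoint a b)
    (hc : a ∪ b = c) (Q : Finpartition a) (R : Finpartition b) : Finpartition c where
  parts := Q.parts ∪ R.parts
  supIndep := by
    rw [Finset.supIndep_iff_pairwiseDisjoint]
    rintro p hp q hq hne
    simp only [Finset.coe_union, Set.mem_union, Finset.mem_coe] at hp hq
    rcases hp with hp | hp <;> rcases hq with hq | hq
    · exact Q.disjoint hp hq hne
    · exact Disjoint.mono (Q.le hp) (R.le hq) hd
    · exact Disjoint.mono (R.le hp) (Q.le hq) hd.symm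
    · exact R.disjoint hp hq hne
  sup_parts := by rw [Finset.sup_union, Q.sup_parts, R.sup_parts, ← hc]; rfl
  bot_notMem := by
    rw [Finset.mem_union]
    rintro (h | h)
    · exact Q.bot_notMem h
    · exact R.bot_notMem h

lemma partUnion_parts {γ : Type*} [DecidableEq γ] {a b c : Finset γ} (hd : Disjoint a b)
    (hc : a ∪ b = c) (Q : Finpartition a) (R : Finpartition b) :
    (partUnion hd hc Q R).parts = Q.parts ∪ R.parts := rfl

end Core2

section Fiber
attribute [local instance] Classical.propDecidable
set_option linter.unusedSectionVars false

variable {n k : ℕ} {A : Finset (Fin n)}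

lemma fib_prac {P : Finpartition (Finset.univ : Finset (Fin n))}
    (hP1 : ¬ IsPractical P) (hP2 : key P = k) :
    ∀ j ≤ k, ∃ t ⊆ P.parts.filter (fun p => p.card ≤ k), ∑ p ∈ t, p.card = j := by
  have h := exists_not_reach hP1
  intro j hj
  obtain ⟨t, ht, hts⟩ := reach_small h j (by rw [hP2]; exact hj)
  rw [hP2] at ht
  exact ⟨t, ht, hts⟩

lemma fib_big {P : Finpartition (Finset.univ : Finset (Fin n))}
    (hP1 : ¬ IsPractical P) (hP2 : key P = k) :
    ∀ p ∈ P.parts.filter (fun p => ¬ p.card ≤ k), k + 1 < p.card := by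
  have h := exists_not_reach hP1
  intro p hp
  have hp' := Finset.mem_filter.1 hp
  have := big_card h hp'.1 (by rw [hP2]; exact hp'.2)
  omega

lemma fib_sup {P : Finpartition (Finset.univ : Finset (Fin n))}
    (hsup : (P.parts.filter fun p => p.card ≤ k).sup id = A) :
    (P.parts.filter fun p => ¬ p.card ≤ k).sup id = Finset.univ \ A := by
  rw [sup_filter_not P (fun p => p.card ≤ k), hsup]

lemma partUnion_filter_le (hA : A.card = k) (Q : Finpartition A)
    (R : Finpartition (Finset.univ \ A)) (hR : ∀ p ∈ R.parts, k + 1 < p.card) :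
    ((partUnion Finset.disjoint_sdiff (Finset.union_sdiff_of_subset A.subset_univ)
      Q R).parts.filter fun p => p.card ≤ k) = Q.parts := by
  rw [partUnion_parts, Finset.filter_union]
  have h1 : Q.parts.filter (fun p => p.card ≤ k) = Q.parts := by
    rw [Finset.filter_eq_self]
    intro p hp
    calc p.card ≤ A.card := Finset.card_le_card (Q.le hp)
    _ = k := hA
  have h2 : R.parts.filter (fun p => p.card ≤ k) = ∅ := by
    rw [Finset.filter_eq_empty_iff]
    intro p hp
    have := hR p hp
    omega
  rw [h1, h2, Finset.union_empty]

lemma partUnion_filter_not_le (hA : A.card = k) (Q : Finpartition A)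
    (R : Finpartition (Finset.univ \ A)) (hR : ∀ p ∈ R.parts, k + 1 < p.card) :
    ((partUnion Finset.disjoint_sdiff (Finset.union_sdiff_of_subset A.subset_univ)
      Q R).parts.filter fun p => ¬ p.card ≤ k) = R.parts := by
  rw [partUnion_parts, Finset.filter_union]
  have h1 : Q.parts.filter (fun p => ¬ p.card ≤ k) = ∅ := by
    rw [Finset.filter_eq_empty_iff]
    intro p hp
    have : p.card ≤ k := by
      calc p.card ≤ A.card := Finset.card_le_card (Q.le hp)
      _ = k := hA
    simpa using this
  have h2 : R.parts.filter (fun p => ¬ p.card ≤ k) = R.parts := by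
    rw [Finset.filter_eq_self]
    intro p hp
    have := hR p hp
    omega
  rw [h1, h2, Finset.empty_union]

lemma fibInv_cond (hA : A.card = k) (hk2 : 2 * k + 2 ≤ n)
    {Q : Finpartition A} {R : Finpartition (Finset.univ \ A)}
    (hQ : ∀ j ≤ k, ∃ t ⊆ Q.parts, ∑ p ∈ t, p.card = j)
    (hR : ∀ p ∈ R.parts, k + 1 < p.card) :
    (¬ IsPractical (partUnion Finset.disjoint_sdiff
        (Finset.union_sdiff_of_subset A.subset_univ) Q R) ∧
      key (partUnion Finset.disjoint_sdiff
        (Finset.union_sdiff_of_subset A.subset_univ) Q R) = k) ∧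
    ((partUnion Finset.disjoint_sdiff (Finset.union_sdiff_of_subset A.subset_univ)
        Q R).parts.filter fun p => p.card ≤ k).sup id = A := by
  set PU := partUnion Finset.disjoint_sdiff (Finset.union_sdiff_of_subset A.subset_univ) Q R
    with hPU
  have hsumQ : ∑ p ∈ Q.parts, p.card = k := by rw [Q.sum_card_parts, hA]
  have hreach : ∀ j ≤ k, reach PU j := by
    intro j hj
    obtain ⟨t, ht, hts⟩ := hQ j hj
    refine ⟨t, ?_, hts⟩
    intro p hp
    rw [hPU, partUnion_parts, Finset.mem_union]
    exact Or.inl (ht hp)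
  have hnreach : ¬ reach PU (k + 1) := by
    rintro ⟨t, ht, hts⟩
    by_cases htR : ∃ r ∈ t, r ∈ R.parts
    · obtain ⟨r, hrt, hrR⟩ := htR
      have h1 : r.card ≤ ∑ p ∈ t, p.card :=
        Finset.single_le_sum (fun p _ => Nat.zero_le _) hrt
      have h2 := hR r hrR
      omega
    · push_neg at htR
      have htQ : t ⊆ Q.parts := by
        intro p hp
        have := ht hp
        rw [hPU, partUnion_parts, Finset.mem_union] at this
        rcases this with h | h
        · exact h
        · exact absurd h (htR p hp)
      have : ∑ p ∈ t, p.card ≤ k := by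
        rw [← hsumQ]
        exact Finset.sum_le_sum_of_subset htQ
      omega
  have himp : ¬ IsPractical PU := fun hpr => hnreach (hpr (k + 1) (by omega))
  refine ⟨⟨himp, key_eq hreach hnreach⟩, ?_⟩
  rw [partUnion_filter_le hA Q R hR, Q.sup_parts]

/-- The fiber equivalence. -/
noncomputable def fiberEquiv (hA : A.card = k) (hk2 : 2 * k + 2 ≤ n) :
    {P : Finpartition (Finset.univ : Finset (Fin n)) //
      (¬ IsPractical P ∧ key P = k) ∧ (P.parts.filter fun p => p.card ≤ k).sup id = A} ≃
    ({Q : Finpartition A // ∀ j ≤ k, ∃ t ⊆ Q.parts, ∑ p ∈ t, p.card = j} ×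
     {R : Finpartition (Finset.univ \ A) // ∀ p ∈ R.parts, k + 1 < p.card}) where
  toFun PP :=
    (⟨PP.1.ofSubset (Finset.filter_subset (fun p => p.card ≤ k) PP.1.parts) PP.2.2,
      by exact fib_prac PP.2.1.1 PP.2.1.2⟩,
     ⟨PP.1.ofSubset (Finset.filter_subset (fun p => ¬ p.card ≤ k) PP.1.parts)
        (fib_sup PP.2.2), by exact fib_big PP.2.1.1 PP.2.1.2⟩)
  invFun QR :=
    ⟨partUnion Finset.disjoint_sdiff (Finset.union_sdiff_of_subset A.subset_univ) QR.1.1 QR.2.1,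
     fibInv_cond hA hk2 QR.1.2 QR.2.2⟩
  left_inv PP := by
    apply Subtype.ext
    apply Finpartition.ext
    rw [partUnion_parts]
    show (PP.1.parts.filter fun p => p.card ≤ k) ∪ (PP.1.parts.filter fun p => ¬ p.card ≤ k)
      = PP.1.parts
    exact Finset.filter_union_filter_not_eq _ _
  right_inv QR := by
    refine Prod.ext ?_ ?_
    · apply Subtype.ext
      apply Finpartition.ext
      show ((partUnion Finset.disjoint_sdiff (Finset.union_sdiff_of_subset A.subset_univ)
        QR.1.1 QR.2.1).parts.filter fun p => p.card ≤ k) = QR.1.1.parts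
      exact partUnion_filter_le hA QR.1.1 QR.2.1 QR.2.2
    · apply Subtype.ext
      apply Finpartition.ext
      show ((partUnion Finset.disjoint_sdiff (Finset.union_sdiff_of_subset A.subset_univ)
        QR.1.1 QR.2.1).parts.filter fun p => ¬ p.card ≤ k) = QR.2.1.parts
      exact partUnion_filter_not_le hA QR.1.1 QR.2.1 QR.2.2

end Fiber

section Main
attribute [local instance] Classical.propDecidable
set_option linter.unusedSectionVars false

variable {n : ℕ}

lemma fiber_zero_iff (hn : 1 ≤ n) (P : Finpartition (Finset.univ : Finset (Fin n))) :
    (¬ IsPractical P ∧ key P = 0) ↔ ∀ p ∈ P.parts, 1 < p.card := by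
  constructor
  · rintro ⟨h1, h2⟩ p hp
    have h := exists_not_reach h1
    have hne := card_part_ne h hp
    have hone := one_le_card_part hp
    rw [h2] at hne
    omega
  · intro hbig
    have hnr : ¬ reach P 1 := by
      rintro ⟨t, ht, hts⟩
      rcases Finset.eq_empty_or_nonempty t with rfl | ⟨p, hp⟩
      · simp at hts
      · have h1 : p.card ≤ 1 := by
          rw [← hts]
          exact Finset.single_le_sum (fun q _ => Nat.zero_le _) hp
        have := hbig p (ht hp)
        omega
    refine ⟨fun hpr => hnr (hpr 1 hn), key_eq (fun j hj => ?_) hnr⟩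
    rw [Nat.le_zero.1 hj]
    exact reach_zero P

set_option maxHeartbeats 2000000 in
/-- For `n ≥ 1`,
`I_n = B_{n,1} + ∑_{k=1}^{⌊(n−2)/2⌋} C(n,k) · P_k · B_{n−k, k+1}`. -/
theorem impractical_eq (n : ℕ) (hn : 1 ≤ n) :
    Impr n = Brough n 1 +
      ∑ k ∈ Finset.Icc 1 ((n - 2) / 2), n.choose k * PP k * Brough (n - k) (k + 1) := by
  have hImpr : Impr n = (Finset.univ.filter
      (fun P : Finpartition (Finset.univ : Finset (Fin n)) => ¬ IsPractical P)).card := by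
    rw [Impr, Bell, PP, Nat.card_eq_fintype_card, Nat.card_eq_fintype_card,
      ← Fintype.card_subtype_compl, Fintype.card_subtype]
  set M := (n - 2) / 2 with hM
  have hb : ∀ P ∈ Finset.univ.filter
      (fun P : Finpartition (Finset.univ : Finset (Fin n)) => ¬ IsPractical P),
      key P ∈ Finset.Icc 0 M := by
    intro P hP
    have hP' := (Finset.mem_filter.1 hP).2
    have := key_bound hP'
    rw [Finset.mem_Icc]
    refine ⟨Nat.zero_le _, ?_⟩
    rw [hM]
    exact Nat.le_div_iff_mul_le (by norm_num) |>.2 (by omega)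
  rw [hImpr, Finset.card_eq_sum_card_fiberwise hb]
  have hicc : Finset.Icc 0 M = insert 0 (Finset.Icc 1 M) := by
    ext x
    simp only [Finset.mem_Icc, Finset.mem_insert]
    omega
  rw [hicc, Finset.sum_insert (by simp)]
  congr 1
  · -- fiber at 0 is `Brough n 1`
    rw [Finset.filter_filter]
    have : Brough n 1 = (Finset.univ.filter
        (fun P : Finpartition (Finset.univ : Finset (Fin n)) =>
          ∀ p ∈ P.parts, 1 < p.card)).card := by
      rw [Brough, Nat.card_eq_fintype_card, Fintype.card_subtype]
    rw [this]
    congr 1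
    ext P
    simp only [Finset.mem_filter, Finset.mem_univ, true_and]
    exact fiber_zero_iff hn P
  · -- fibers at `k ≥ 1`
    refine Finset.sum_congr rfl fun k hk => ?_
    rw [Finset.mem_Icc] at hk
    have hk2 : 2 * k + 2 ≤ n := by
      have := (Nat.le_div_iff_mul_le (k := 2) (by norm_num)).1 (hM ▸ hk.2)
      omega
    rw [Finset.filter_filter]
    have hb2 : ∀ P ∈ Finset.univ.filter
        (fun P : Finpartition (Finset.univ : Finset (Fin n)) =>
          ¬ IsPractical P ∧ key P = k),
        (P.parts.filter fun p => p.card ≤ k).sup id ∈ Finset.powersetCard k Finset.univ := by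
      intro P hP
      have hP' := (Finset.mem_filter.1 hP).2
      rw [Finset.mem_powersetCard]
      refine ⟨Finset.subset_univ _, ?_⟩
      rw [← hP'.2]
      exact card_smallA (exists_not_reach hP'.1)
    rw [Finset.card_eq_sum_card_fiberwise hb2]
    have hfib : ∀ A ∈ Finset.powersetCard k (Finset.univ : Finset (Fin n)),
        ((Finset.univ.filter (fun P : Finpartition (Finset.univ : Finset (Fin n)) =>
          ¬ IsPractical P ∧ key P = k)).filter
            (fun P => (P.parts.filter fun p => p.card ≤ k).sup id = A)).card =
          PP k * Brough (n - k) (k + 1) := by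
      intro A hA
      rw [Finset.mem_powersetCard] at hA
      have hAcard : A.card = k := hA.2
      have hAc : (Finset.univ \ A).card = n - k := by
        rw [Finset.card_sdiff_of_subset (Finset.subset_univ A), hAcard]
        simp
      rw [Finset.filter_filter]
      have hcard : ((Finset.univ.filter
          (fun P : Finpartition (Finset.univ : Finset (Fin n)) =>
            (¬ IsPractical P ∧ key P = k) ∧
              (P.parts.filter fun p => p.card ≤ k).sup id = A))).card =
          Nat.card {P : Finpartition (Finset.univ : Finset (Fin n)) //
            (¬ IsPractical P ∧ key P = k) ∧
              (P.parts.filter fun p => p.card ≤ k).sup id = A} := by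
        rw [Nat.card_eq_fintype_card, Fintype.card_subtype]
      rw [hcard, Nat.card_congr (fiberEquiv hAcard hk2), Nat.card_prod]
      have h1 : Nat.card {Q : Finpartition A // ∀ j ≤ k, ∃ t ⊆ Q.parts, ∑ p ∈ t, p.card = j} =
          PP k := by
        rw [card_prac_transfer k A hAcard]
        rfl
      have h2 : Nat.card {R : Finpartition (Finset.univ \ A) // ∀ p ∈ R.parts, k + 1 < p.card} =
          Brough (n - k) (k + 1) := by
        rw [card_big_transfer (n - k) (Finset.univ \ A) hAc (k + 1)]
        rfl
      rw [h1, h2]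
    rw [Finset.sum_congr rfl hfib, Finset.sum_const, Finset.card_powersetCard,
      Finset.card_univ, Fintype.card_fin, smul_eq_mul, ← mul_assoc]
end Main
end

section
/- For every real r > 0 and integers n ≥ 1, m ≥ 0, the number of m-rough set partitions satisfies B_{n,m} ≤ n! · exp(e^r − β_m(r)) / r^n, where β_m(r) = Σ_{j=0}^{m} r^j/j!. -/
open Finset

/-! ### Auxiliary material for the proof -/

section Aux

open Polynomial

/-- The truncated exponential-tail polynomial `∑_{s=m+1}^{n} x^s/s!`. -/
noncomputable def hpoly (m n : ℕ) : ℝ[X] :=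
  ∑ s ∈ Finset.Icc (m+1) n, Polynomial.C (1/(s.factorial : ℝ)) * Polynomial.X ^ s

lemma hpoly_coeff (m n k : ℕ) :
    (hpoly m n).coeff k = if k ∈ Finset.Icc (m+1) n then 1/(k.factorial : ℝ) else 0 := by
  rw [hpoly, Polynomial.finset_sum_coeff]
  simp only [Polynomial.coeff_C_mul, Polynomial.coeff_X_pow]
  rw [Finset.sum_congr rfl (fun s _ => by rw [mul_ite, mul_one, mul_zero] :
    ∀ s ∈ Finset.Icc (m+1) n,
      (1/(s.factorial:ℝ)) * (if k = s then 1 else 0) = if k = s then 1/(s.factorial:ℝ) else 0)]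
  simp [Finset.sum_ite_eq (Finset.Icc (m+1) n) k (fun s => 1/(s.factorial : ℝ)), eq_comm]

lemma hpoly_coeff_nonneg (m n k : ℕ) : 0 ≤ (hpoly m n).coeff k := by
  rw [hpoly_coeff]; split <;> positivity

lemma hpoly_eval (m n : ℕ) (r : ℝ) :
    (hpoly m n).eval r = ∑ s ∈ Finset.Icc (m+1) n, r^s/(s.factorial : ℝ) := by
  rw [hpoly, Polynomial.eval_finset_sum]
  refine Finset.sum_congr rfl fun s _ => ?_
  rw [Polynomial.eval_mul, Polynomial.eval_C, Polynomial.eval_pow, Polynomial.eval_X, one_div,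
    inv_mul_eq_div]

lemma coeff_pow_nonneg {p : ℝ[X]} (hp : ∀ k, 0 ≤ p.coeff k) (j k : ℕ) :
    0 ≤ (p^j).coeff k := by
  induction j generalizing k with
  | zero => simp only [pow_zero, Polynomial.coeff_one]; split <;> norm_num
  | succ i ih =>
    rw [pow_succ, Polynomial.coeff_mul]
    exact Finset.sum_nonneg fun x _ => mul_nonneg (ih _) (hp _)

lemma coeff_le_eval {p : ℝ[X]} (hp : ∀ k, 0 ≤ p.coeff k) {r : ℝ} (hr : 0 ≤ r) (k : ℕ) :
    p.coeff k * r^k ≤ p.eval r := by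
  rcases le_or_gt (p.natDegree + 1) k with hk | hk
  · rw [Polynomial.coeff_eq_zero_of_natDegree_lt (by omega)]
    simp only [zero_mul]
    rw [Polynomial.eval_eq_sum_range]
    exact Finset.sum_nonneg fun i _ => mul_nonneg (hp i) (pow_nonneg hr i)
  · rw [Polynomial.eval_eq_sum_range]
    exact Finset.single_le_sum (f := fun i => p.coeff i * r^i)
      (fun i _ => mul_nonneg (hp i) (pow_nonneg hr i)) (Finset.mem_range.2 hk)

/-- The number of functions `Fin k → Fin p` all of whose fibers have more than `m` elements. -/
def Ffun (m p k : ℕ) : ℕ :=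
  Fintype.card {f : Fin k → Fin p // ∀ i, m < Fintype.card {x // f x = i}}

/-- Splitting off the fiber of the last colour. -/
def stepMap (m p k : ℕ)
    (f : {f : Fin k → Fin (p+1) // ∀ i, m < Fintype.card {x // f x = i}}) :
    Σ t : {t : Finset (Fin k) // m < t.card},
      {g : {x : Fin k // x ∈ (t : Finset (Fin k))ᶜ} → Fin p //
        ∀ i, m < Fintype.card {x // g x = i}} := by
  classical
  refine ⟨⟨Finset.univ.filter (fun x => f.1 x = Fin.last p), ?_⟩,
    ⟨fun x => (f.1 x.1).castPred ?_, ?_⟩⟩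
  · have := f.2 (Fin.last p)
    rwa [Fintype.card_subtype] at this
  · have hx := x.2
    simp only [Finset.mem_compl, Finset.mem_filter, Finset.mem_univ, true_and] at hx
    exact hx
  · intro i
    have hc := f.2 i.castSucc
    have E : {x : Fin k // f.1 x = i.castSucc} ≃
        {x : {x : Fin k // x ∈ (Finset.univ.filter (fun x => f.1 x = Fin.last p))ᶜ} //
          (f.1 x.1).castPred (by
            have hx := x.2
            simp only [Finset.mem_compl, Finset.mem_filter, Finset.mem_univ, true_and] at hx
            exact hx) = i} := by
      refine ⟨fun x => ⟨⟨x.1, ?_⟩, ?_⟩, fun y => ⟨y.1.1, ?_⟩, fun x => rfl, fun y => rfl⟩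
      · simp only [Finset.mem_compl, Finset.mem_filter, Finset.mem_univ, true_and]
        rw [x.2]
        exact (Fin.castSucc_lt_last i).ne
      · have : (f.1 x.1) = i.castSucc := x.2
        apply Fin.castSucc_injective
        rw [Fin.castSucc_castPred, this]
      · have hy := y.2
        have : (f.1 y.1.1).castPred _ = i := hy
        rw [← Fin.castSucc_castPred (f.1 y.1.1), this]
        have hx := y.1.2
        simp only [Finset.mem_compl, Finset.mem_filter, Finset.mem_univ, true_and] at hx
        exact hx
    rw [← Fintype.card_congr E]
    exact hc

lemma stepMap_injective (m p k : ℕ) : Function.Injective (stepMap m p k) := by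
  classical
  have key : ∀ f, (fun x : Fin k =>
      if hx : x ∈ ((stepMap m p k f).1 : Finset (Fin k))ᶜ
      then ((stepMap m p k f).2.1 ⟨x, hx⟩).castSucc else Fin.last p) = f.1 := by
    intro f
    funext x
    by_cases hx : x ∈ ((stepMap m p k f).1 : Finset (Fin k))ᶜ
    · rw [dif_pos hx]
      have hx' : f.1 x ≠ Fin.last p := by
        simp only [stepMap, Finset.mem_compl, Finset.mem_filter, Finset.mem_univ,
          true_and] at hx
        exact hx
      exact Fin.castSucc_castPred _ hx'
    · rw [dif_neg hx]
      simp only [stepMap, Finset.mem_compl, Finset.mem_filter, Finset.mem_univ, true_and,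
        not_not] at hx
      exact hx.symm
  intro a b hab
  apply Subtype.ext
  rw [← key a, ← key b, hab]

lemma card_cond_eq {α : Type*} [Fintype α] [DecidableEq α] (m p k : ℕ) (e : α ≃ Fin k) :
    Fintype.card {f : α → Fin p // ∀ i, m < Fintype.card {x // f x = i}} = Ffun m p k := by
  rw [Ffun]
  apply Fintype.card_congr
  refine Equiv.subtypeEquiv (Equiv.arrowCongr e (Equiv.refl (Fin p))) (fun f => ?_)
  refine forall_congr' fun i => ?_
  have : Fintype.card {x // f x = i}
      = Fintype.card {y : Fin k // (Equiv.arrowCongr e (Equiv.refl (Fin p)) f) y = i} := by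
    apply Fintype.card_congr
    refine Equiv.subtypeEquiv e (fun x => ?_)
    simp [Equiv.arrowCongr]
  rw [this]

lemma Ffun_succ_le (m p k : ℕ) :
    Ffun m (p+1) k ≤ ∑ s ∈ Finset.Icc (m+1) k, k.choose s * Ffun m p (k - s) := by
  classical
  have h1 : Ffun m (p+1) k ≤ Fintype.card (Σ t : {t : Finset (Fin k) // m < t.card},
      {g : {x : Fin k // x ∈ (t : Finset (Fin k))ᶜ} → Fin p //
        ∀ i, m < Fintype.card {x // g x = i}}) :=
    Fintype.card_le_of_injective _ (stepMap_injective m p k)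
  rw [Fintype.card_sigma] at h1
  have h2 : ∀ t : {t : Finset (Fin k) // m < t.card},
      Fintype.card {g : {x : Fin k // x ∈ (t : Finset (Fin k))ᶜ} → Fin p //
        ∀ i, m < Fintype.card {x // g x = i}} = Ffun m p (k - (t : Finset (Fin k)).card) := by
    intro t
    have hcard : Fintype.card {x : Fin k // x ∈ (t : Finset (Fin k))ᶜ}
        = k - (t : Finset (Fin k)).card := by
      rw [Fintype.card_coe, Finset.card_compl, Fintype.card_fin]
    exact card_cond_eq m p _ (Fintype.equivFinOfCardEq hcard)
  rw [Finset.sum_congr rfl (fun t _ => h2 t)] at h1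
  refine h1.trans (le_of_eq ?_)
  rw [← Finset.sum_subtype (Finset.univ.filter (fun t : Finset (Fin k) => m < t.card))
    (fun t => by simp) (fun t => Ffun m p (k - t.card))]
  rw [← Finset.sum_fiberwise_of_maps_to (g := Finset.card) (t := Finset.Icc (m+1) k) ?_
    (fun t => Ffun m p (k - t.card))]
  · refine Finset.sum_congr rfl fun s hs => ?_
    simp only [Finset.mem_Icc] at hs
    have hset : (Finset.univ.filter (fun t : Finset (Fin k) => m < t.card)).filter
        (fun t => t.card = s) = Finset.powersetCard s Finset.univ := by
      ext t
      simp only [Finset.mem_filter, Finset.mem_univ, true_and, Finset.mem_powersetCard_univ]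
      constructor
      · rintro ⟨_, h⟩; exact h
      · intro h; exact ⟨h ▸ hs.1, h⟩
    rw [hset]
    rw [Finset.sum_congr rfl (fun t ht => by
      rw [Finset.mem_powersetCard_univ] at ht
      rw [ht] : ∀ t ∈ Finset.powersetCard s Finset.univ,
        Ffun m p (k - t.card) = Ffun m p (k - s))]
    rw [Finset.sum_const, Finset.card_powersetCard, Finset.card_univ, Fintype.card_fin,
      smul_eq_mul]
  · intro t ht
    simp only [Finset.mem_filter, Finset.mem_univ, true_and] at ht
    rw [Finset.mem_Icc]
    exact ⟨ht, (Finset.card_le_univ t).trans (by simp)⟩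

lemma Ffun_le (m nMax p : ℕ) : ∀ k ≤ nMax,
    (Ffun m p k : ℝ) ≤ k.factorial * ((hpoly m nMax)^p).coeff k := by
  induction p with
  | zero =>
    intro k _
    rw [Ffun]
    have : Fintype.card {f : Fin k → Fin 0 // ∀ i, m < Fintype.card {x // f x = i}}
        = Fintype.card (Fin k → Fin 0) :=
      Fintype.card_congr (Equiv.subtypeUnivEquiv (fun f i => i.elim0))
    rw [this, Fintype.card_fun, Fintype.card_fin, Fintype.card_fin]
    cases k with
    | zero => simp
    | succ k' =>
      simp only [pow_zero, Polynomial.coeff_one]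
      norm_num
  | succ p ih =>
    intro k hk
    have step := Ffun_succ_le m p k
    have cast1 : (Ffun m (p+1) k : ℝ)
        ≤ ∑ s ∈ Finset.Icc (m+1) k, (k.choose s : ℝ) * Ffun m p (k - s) := by
      have := (Nat.cast_le (α := ℝ)).2 step
      push_cast at this
      exact this
    refine cast1.trans ?_
    have step2 : ∑ s ∈ Finset.Icc (m+1) k, (k.choose s : ℝ) * Ffun m p (k - s)
        ≤ ∑ s ∈ Finset.Icc (m+1) k,
          (k.factorial : ℝ) * ((hpoly m nMax).coeff s * ((hpoly m nMax)^p).coeff (k - s)) := by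
      refine Finset.sum_le_sum fun s hs => ?_
      rw [Finset.mem_Icc] at hs
      have hsk : s ≤ k := hs.2
      have hih := ih (k - s) (le_trans (Nat.sub_le k s) hk)
      have hcs : (hpoly m nMax).coeff s = 1/(s.factorial : ℝ) := by
        rw [hpoly_coeff, if_pos (Finset.mem_Icc.2 ⟨hs.1, hsk.trans hk⟩)]
      rw [hcs]
      have hfact : (k.choose s : ℝ) * (k - s).factorial = k.factorial / s.factorial := by
        have := Nat.choose_mul_factorial_mul_factorial hsk
        have h2 : ((k.choose s * s.factorial * (k-s).factorial : ℕ) : ℝ)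
            = (k.factorial : ℝ) := by rw [this]
        push_cast at h2
        field_simp at h2 ⊢
        linarith [h2]
      calc (k.choose s : ℝ) * Ffun m p (k - s)
          ≤ (k.choose s : ℝ) * ((k-s).factorial * ((hpoly m nMax)^p).coeff (k - s)) :=
            mul_le_mul_of_nonneg_left hih (Nat.cast_nonneg _)
        _ = ((k.choose s : ℝ) * (k-s).factorial) * ((hpoly m nMax)^p).coeff (k - s) := by ring
        _ = (k.factorial : ℝ) * (1/(s.factorial:ℝ) * ((hpoly m nMax)^p).coeff (k - s)) := by
            rw [hfact]; ring
    refine step2.trans ?_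
    rw [← Finset.mul_sum]
    refine mul_le_mul_of_nonneg_left ?_ (Nat.cast_nonneg _)
    rw [pow_succ' (hpoly m nMax) p, Polynomial.coeff_mul]
    have himg : ∑ s ∈ Finset.Icc (m+1) k,
        (hpoly m nMax).coeff s * ((hpoly m nMax)^p).coeff (k - s)
        = ∑ q ∈ (Finset.Icc (m+1) k).image (fun s => (s, k - s)),
          (hpoly m nMax).coeff q.1 * ((hpoly m nMax)^p).coeff q.2 := by
      rw [Finset.sum_image]
      intro a _ b _ hab
      exact (Prod.mk.injEq _ _ _ _ ▸ hab).1
    rw [himg]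
    refine Finset.sum_le_sum_of_subset_of_nonneg ?_ ?_
    · intro q hq
      simp only [Finset.mem_image, Finset.mem_Icc] at hq
      obtain ⟨s, ⟨_, hsk⟩, rfl⟩ := hq
      rw [Finset.HasAntidiagonal.mem_antidiagonal]
      omega
    · intro q _ _
      exact mul_nonneg (hpoly_coeff_nonneg _ _ _) (coeff_pow_nonneg (hpoly_coeff_nonneg _ _) _ _)

noncomputable def plab (n p : ℕ) (P : Finpartition (Finset.univ : Finset (Fin n)))
    (hp : P.parts.card = p) : ↥P.parts ≃ Fin p :=
  Fintype.equivFinOfCardEq (by rw [Fintype.card_coe, hp])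

noncomputable def packMap (n m p : ℕ)
    (Pπ : {P : Finpartition (Finset.univ : Finset (Fin n)) //
        (∀ t ∈ P.parts, m < t.card) ∧ P.parts.card = p} × Equiv.Perm (Fin p)) :
    {f : Fin n → Fin p // ∀ i, m < Fintype.card {x // f x = i}} := by
  classical
  refine ⟨fun x => Pπ.2 (plab n p Pπ.1.1 Pπ.1.2.2
    ⟨Pπ.1.1.part x, Pπ.1.1.part_mem.2 (Finset.mem_univ x)⟩), ?_⟩
  intro i
  set P := Pπ.1.1 with hPdef
  set L := plab n p Pπ.1.1 Pπ.1.2.2 with hLdef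
  set t := L.symm (Pπ.2.symm i) with htdef
  have key : ∀ x : Fin n,
      (Pπ.2 (L ⟨P.part x, P.part_mem.2 (Finset.mem_univ x)⟩) = i) ↔ x ∈ (t : Finset (Fin n)) := by
    intro x
    rw [Equiv.apply_eq_iff_eq_symm_apply, Equiv.apply_eq_iff_eq_symm_apply, ← htdef,
      Subtype.ext_iff]
    constructor
    · intro h
      exact h ▸ P.mem_part (Finset.mem_univ x)
    · intro h
      exact P.part_eq_of_mem t.2 h
  have : Fintype.card {x : Fin n //
      Pπ.2 (L ⟨P.part x, P.part_mem.2 (Finset.mem_univ x)⟩) = i} = (t : Finset (Fin n)).card := by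
    rw [Fintype.card_congr (Equiv.subtypeEquivRight key), Fintype.card_coe]
  rw [this]
  exact Pπ.1.2.1 t.1 t.2

lemma packMap_part (n m p : ℕ) (Pπ) (x : Fin n) :
    Pπ.1.1.part x =
      Finset.univ.filter (fun y => (packMap n m p Pπ).1 y = (packMap n m p Pπ).1 x) := by
  ext y
  simp only [Finset.mem_filter, Finset.mem_univ, true_and]
  rw [Pπ.1.1.mem_part_iff_part_eq_part (Finset.mem_univ y) (Finset.mem_univ x)]
  show _ ↔ Pπ.2 (plab n p Pπ.1.1 Pπ.1.2.2 ⟨Pπ.1.1.part y, _⟩)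
    = Pπ.2 (plab n p Pπ.1.1 Pπ.1.2.2 ⟨Pπ.1.1.part x, _⟩)
  rw [Equiv.apply_eq_iff_eq, Equiv.apply_eq_iff_eq, Subtype.mk.injEq]

lemma parts_eq_of_part_eq {n : ℕ} {P Q : Finpartition (Finset.univ : Finset (Fin n))}
    (h : ∀ x, P.part x = Q.part x) : P = Q := by
  ext t
  constructor
  · intro ht
    obtain ⟨x, hx⟩ := P.nonempty_of_mem_parts ht
    have := P.part_eq_of_mem ht hx
    rw [h x] at this
    exact this ▸ Q.part_mem.2 (Finset.mem_univ x)
  · intro ht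
    obtain ⟨x, hx⟩ := Q.nonempty_of_mem_parts ht
    have := Q.part_eq_of_mem ht hx
    rw [← h x] at this
    exact this ▸ P.part_mem.2 (Finset.mem_univ x)

lemma packMap_injective (n m p : ℕ) : Function.Injective (packMap n m p) := by
  intro a b hab
  have hpart : ∀ x, a.1.1.part x = b.1.1.part x := by
    intro x
    rw [packMap_part n m p a x, packMap_part n m p b x, hab]
  have hP : a.1.1 = b.1.1 := parts_eq_of_part_eq hpart
  obtain ⟨⟨P, hPa⟩, π⟩ := a
  obtain ⟨⟨Q, hQb⟩, ρ⟩ := b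
  simp only at hP
  subst hP
  have hf : ∀ x, π (plab n p P hPa.2 ⟨P.part x, P.part_mem.2 (Finset.mem_univ x)⟩)
      = ρ (plab n p P hQb.2 ⟨P.part x, P.part_mem.2 (Finset.mem_univ x)⟩) :=
    fun x => congrFun (congrArg Subtype.val hab) x
  have hπ : π = ρ := by
    apply Equiv.ext
    intro i
    set u := (plab n p P hPa.2).symm i with hu
    obtain ⟨x, hx⟩ := P.nonempty_of_mem_parts u.2
    have h1 : (⟨P.part x, P.part_mem.2 (Finset.mem_univ x)⟩ : ↥P.parts) = u :=
      Subtype.ext (P.part_eq_of_mem u.2 hx)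
    have h2 : plab n p P hPa.2 ⟨P.part x, P.part_mem.2 (Finset.mem_univ x)⟩ = i := by
      rw [h1, hu, Equiv.apply_symm_apply]
    have := hf x
    rw [h2] at this
    exact this
  rw [hπ]

lemma card_pack_le (n m p : ℕ) :
    Fintype.card {P : Finpartition (Finset.univ : Finset (Fin n)) //
      (∀ t ∈ P.parts, m < t.card) ∧ P.parts.card = p} * p.factorial ≤ Ffun m p n := by
  have := Fintype.card_le_of_injective _ (packMap_injective n m p)
  rwa [Fintype.card_prod, Fintype.card_perm, Fintype.card_fin] at this

lemma brough_card_split (n m : ℕ) :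
    Brough n m = ∑ p ∈ Finset.range (n+1),
      Fintype.card {P : Finpartition (Finset.univ : Finset (Fin n)) //
        (∀ t ∈ P.parts, m < t.card) ∧ P.parts.card = p} := by
  classical
  rw [Brough, Nat.card_eq_fintype_card, Fintype.card_subtype]
  rw [Finset.card_eq_sum_card_fiberwise
    (f := fun P : Finpartition (Finset.univ : Finset (Fin n)) => P.parts.card)
    (t := Finset.range (n+1)) ?_]
  · refine Finset.sum_congr rfl fun p _ => ?_
    rw [Fintype.card_subtype, Finset.filter_filter]
  · intro P _
    rw [Finset.mem_coe, Finset.mem_range, Nat.lt_succ_iff]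
    have := P.card_parts_le_card
    simpa using this

end Aux

/-- For every `r > 0`, `n ≥ 1`, `m ≥ 0`:
`B_{n,m} ≤ n! · exp(e^r − β_m(r)) / r^n`, where `β_m(r) = ∑_{j=0}^m r^j/j!`. -/
theorem rough_count_upper_bound (r : ℝ) (hr : 0 < r) (n : ℕ) (hn : 1 ≤ n) (m : ℕ) :
    (Brough n m : ℝ) ≤ (n.factorial : ℝ) *
      Real.exp (Real.exp r - ∑ j ∈ Finset.range (m + 1), r ^ j / (j.factorial : ℝ)) / r ^ n := by
  classical
  set X : ℝ := (hpoly m n).eval r with hX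
  have hX0 : 0 ≤ X := by
    rw [hX, hpoly_eval]
    exact Finset.sum_nonneg fun s _ => by positivity
  have hXle : X ≤ Real.exp r - ∑ j ∈ Finset.range (m + 1), r ^ j / (j.factorial : ℝ) := by
    rw [hX, hpoly_eval]
    rcases le_or_gt (m+1) (n+1) with hmn | hmn
    · have : Finset.Icc (m+1) n = Finset.Ico (m+1) (n+1) := by
        rw [Finset.Ico_add_one_right_eq_Icc]
      rw [this, Finset.sum_Ico_eq_sub _ hmn]
      have := Real.sum_le_exp_of_nonneg hr.le (n+1)
      linarith
    · have : Finset.Icc (m+1) n = ∅ := by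
        rw [Finset.Icc_eq_empty_iff]; omega
      rw [this, Finset.sum_empty]
      have := Real.sum_le_exp_of_nonneg hr.le (m+1)
      linarith
  have key : (Brough n m : ℝ) * r ^ n ≤ (n.factorial : ℝ) *
      Real.exp (Real.exp r - ∑ j ∈ Finset.range (m + 1), r ^ j / (j.factorial : ℝ)) := by
    have hsplit : (Brough n m : ℝ)
        ≤ ∑ p ∈ Finset.range (n+1), (Ffun m p n : ℝ) / p.factorial := by
      rw [brough_card_split n m]
      push_cast
      refine Finset.sum_le_sum fun p _ => ?_
      rw [le_div_iff₀ (by positivity : (0:ℝ) < (p.factorial : ℝ))]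
      have := card_pack_le n m p
      exact_mod_cast this
    calc (Brough n m : ℝ) * r ^ n
        ≤ (∑ p ∈ Finset.range (n+1), (Ffun m p n : ℝ) / p.factorial) * r ^ n :=
          mul_le_mul_of_nonneg_right hsplit (by positivity)
      _ = ∑ p ∈ Finset.range (n+1),
            ((Ffun m p n : ℝ) * r ^ n) / p.factorial := by
          rw [Finset.sum_mul]
          exact Finset.sum_congr rfl fun p _ => by ring
      _ ≤ ∑ p ∈ Finset.range (n+1),
            ((n.factorial : ℝ) * X ^ p) / p.factorial := by
          refine Finset.sum_le_sum fun p _ => ?_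
          refine div_le_div_of_nonneg_right ?_ (by positivity) |>.trans_eq rfl
          calc (Ffun m p n : ℝ) * r ^ n
              ≤ ((n.factorial : ℝ) * ((hpoly m n)^p).coeff n) * r ^ n :=
                mul_le_mul_of_nonneg_right (Ffun_le m n p n le_rfl) (by positivity)
            _ = (n.factorial : ℝ) * (((hpoly m n)^p).coeff n * r ^ n) := by ring
            _ ≤ (n.factorial : ℝ) * X ^ p := by
                refine mul_le_mul_of_nonneg_left ?_ (by positivity)
                have := coeff_le_eval (coeff_pow_nonneg (hpoly_coeff_nonneg m n) p) hr.le n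
                rwa [Polynomial.eval_pow] at this
      _ = (n.factorial : ℝ) * ∑ p ∈ Finset.range (n+1), X ^ p / p.factorial := by
          rw [Finset.mul_sum]
          exact Finset.sum_congr rfl fun p _ => by ring
      _ ≤ (n.factorial : ℝ) * Real.exp X :=
          mul_le_mul_of_nonneg_left (Real.sum_le_exp_of_nonneg hX0 (n+1)) (by positivity)
      _ ≤ _ :=
          mul_le_mul_of_nonneg_left (Real.exp_le_exp.2 hXle) (by positivity)
  rw [le_div_iff₀ (by positivity : (0:ℝ) < r ^ n)]
  exact key
end

section
/- For every set S of positive integers and real r > 0, the derivative bound α''(r) ≤ 3 + 3·α'(r) holds, where α(z) = Σ_{k∈S} z^k/k!; more precisely, Σ_{k∈S, k≥2} r^{k−2}/(k−2)! ≤ 3 + 3·Σ_{k∈S, k≥1} r^{k−1}/(k−1)!. -/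
open Classical in
/-- For a set `S` of positive integers and `r > 0`, `α''(r) ≤ 3 + 3 α'(r)`:
`∑_{k∈S, k≥2} r^{k−2}/(k−2)! ≤ 3 + 3 ∑_{k∈S, k≥1} r^{k−1}/(k−1)!`. -/
theorem alpha_second_deriv_bound (S : Set ℕ) (hS : ∀ k ∈ S, 1 ≤ k) (r : ℝ) (hr : 0 < r) :
    (∑' k : ℕ, if k ∈ S ∧ 2 ≤ k then r ^ (k - 2) / ((k - 2).factorial : ℝ) else 0) ≤
      3 + 3 * ∑' k : ℕ, if k ∈ S ∧ 1 ≤ k then r ^ (k - 1) / ((k - 1).factorial : ℝ) else 0 := by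
  set f : ℕ → ℝ := fun k => if k ∈ S ∧ 2 ≤ k then r ^ (k - 2) / ((k - 2).factorial : ℝ) else 0
    with hfdef
  set g : ℕ → ℝ := fun k => if k ∈ S ∧ 1 ≤ k then r ^ (k - 1) / ((k - 1).factorial : ℝ) else 0
    with hgdef
  set c : ℝ := (3 : ℝ) ^ (1 - 3 * r) with hcdef
  have hc0 : 0 < c := Real.rpow_pos_of_pos (by norm_num) _
  -- dominating sequences
  have hsum1 : Summable (fun k : ℕ => r ^ (k - 1) / ((k - 1).factorial : ℝ)) := by
    rw [← summable_nat_add_iff 1]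
    simpa using Real.summable_pow_div_factorial r
  have hsum2 : ∀ x : ℝ, Summable (fun k : ℕ => x ^ (k - 2) / ((k - 2).factorial : ℝ)) := by
    intro x
    rw [← summable_nat_add_iff 2]
    simpa using Real.summable_pow_div_factorial x
  have hfnn : ∀ k, 0 ≤ f k := by
    intro k
    simp only [hfdef]
    split
    · positivity
    · exact le_rfl
  have hgnn : ∀ k, 0 ≤ g k := by
    intro k
    simp only [hgdef]
    split
    · positivity
    · exact le_rfl
  have hfs : Summable f := by
    apply Summable.of_nonneg_of_le hfnn _ (hsum2 r)
    intro k
    simp only [hfdef]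
    split
    · exact le_rfl
    · positivity
  have hgs : Summable g := by
    apply Summable.of_nonneg_of_le hgnn _ hsum1
    intro k
    simp only [hgdef]
    split
    · exact le_rfl
    · positivity
  -- the tail majorant
  set h : ℕ → ℝ := fun k => if 2 ≤ k then c * (3 * r) ^ (k - 2) / ((k - 2).factorial : ℝ) else 0
    with hhdef
  have hhnn : ∀ k, 0 ≤ h k := by
    intro k
    simp only [hhdef]
    split
    · positivity
    · exact le_rfl
  have hhs : Summable h := by
    apply Summable.of_nonneg_of_le hhnn _ ((hsum2 (3 * r)).mul_left c)
    intro k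
    simp only [hhdef]
    split
    · rw [mul_div_assoc]
    · positivity
  -- pointwise bound f k ≤ 3 * g k + h k
  have key : ∀ k : ℕ, f k ≤ 3 * g k + h k := by
    intro k
    by_cases hk : k ∈ S ∧ 2 ≤ k
    · obtain ⟨hkS, hk2⟩ := hk
      have hg1 : g k = r ^ (k - 1) / ((k - 1).factorial : ℝ) := by
        simp only [hgdef]
        rw [if_pos ⟨hkS, by omega⟩]
      have hfac : ((k - 1).factorial : ℝ) = (k - 1 : ℕ) * ((k - 2).factorial : ℝ) := by
        have h21 : k - 1 = (k - 2) + 1 := by omega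
        rw [h21, Nat.factorial_succ]
        push_cast
        ring
      have hpow : r ^ (k - 1) = r ^ (k - 2) * r := by
        have : k - 1 = (k - 2) + 1 := by omega
        rw [this, pow_succ]
      have hf1 : f k = r ^ (k - 2) / ((k - 2).factorial : ℝ) := by
        simp [hfdef, hkS, hk2]
      by_cases hsmall : ((k : ℝ) : ℝ) ≤ 3 * r + 1
      · -- small k: f k ≤ 3 * g k
        have hk1 : ((k - 1 : ℕ) : ℝ) ≤ 3 * r := by
          have : ((k - 1 : ℕ) : ℝ) = (k : ℝ) - 1 := by
            have h1 : 1 ≤ k := le_trans (by norm_num) hk2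
            push_cast [h1]
            ring
          rw [this]; linarith
        have hk1pos : (0 : ℝ) < ((k - 1 : ℕ) : ℝ) := by
          have : 1 ≤ k - 1 := by omega
          exact_mod_cast Nat.lt_of_lt_of_le Nat.zero_lt_one this
        have hfacpos : (0 : ℝ) < ((k - 2).factorial : ℝ) := by
          exact_mod_cast Nat.factorial_pos _
        have hratio : (1 : ℝ) ≤ 3 * r / ((k - 1 : ℕ) : ℝ) :=
          (one_le_div hk1pos).mpr hk1
        have : f k ≤ 3 * g k := by
          rw [hf1, hg1, hpow, hfac]
          calc r ^ (k - 2) / ((k - 2).factorial : ℝ)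
              = 1 * (r ^ (k - 2) / ((k - 2).factorial : ℝ)) := by ring
            _ ≤ (3 * r / ((k - 1 : ℕ) : ℝ)) * (r ^ (k - 2) / ((k - 2).factorial : ℝ)) := by
                apply mul_le_mul_of_nonneg_right hratio (by positivity)
            _ = 3 * (r ^ (k - 2) * r / (((k - 1 : ℕ) : ℝ) * ((k - 2).factorial : ℝ))) := by
                field_simp
        linarith [hhnn k]
      · -- large k: f k ≤ h k
        push_neg at hsmall
        have hh1 : h k = c * (3 * r) ^ (k - 2) / ((k - 2).factorial : ℝ) := by
          simp [hhdef, hk2]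
        have hbound : r ^ (k - 2) ≤ c * (3 * r) ^ (k - 2) := by
          rw [mul_pow]
          have h3 : (1 : ℝ) ≤ c * 3 ^ (k - 2) := by
            have : c * (3:ℝ) ^ (k - 2) = (3 : ℝ) ^ ((1 - 3 * r) + (k - 2 : ℕ)) := by
              rw [Real.rpow_add (by norm_num), hcdef, Real.rpow_natCast]
            rw [this]
            have : (0 : ℝ) ≤ (1 - 3 * r) + (k - 2 : ℕ) := by
              have : ((k - 2 : ℕ) : ℝ) = (k : ℝ) - 2 := by
                push_cast [hk2]; ring
              rw [this]; linarith
            calc (1 : ℝ) = (3 : ℝ) ^ (0 : ℝ) := by simp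
              _ ≤ (3 : ℝ) ^ ((1 - 3 * r) + (k - 2 : ℕ)) :=
                Real.rpow_le_rpow_left_iff (by norm_num) |>.mpr this
          calc r ^ (k - 2) = 1 * r ^ (k - 2) := by ring
            _ ≤ (c * 3 ^ (k - 2)) * r ^ (k - 2) := by
                apply mul_le_mul_of_nonneg_right h3 (by positivity)
            _ = c * (3 ^ (k - 2) * r ^ (k - 2)) := by ring
        have : f k ≤ h k := by
          rw [hf1, hh1]
          exact div_le_div_of_nonneg_right hbound (by positivity)
        linarith [mul_nonneg (by norm_num : (0:ℝ) ≤ 3) (hgnn k)]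
    · have : f k = 0 := by simp [hfdef, hk]
      rw [this]
      positivity
  -- sum of h is at most 3
  have hhsum : (∑' k, h k) ≤ 3 := by
    have hsplit : (∑ i ∈ Finset.range 2, h i) + ∑' n, h (n + 2) = ∑' k, h k :=
      Summable.sum_add_tsum_nat_add 2 hhs
    have hzero : (∑ i ∈ Finset.range 2, h i) = 0 := by
      simp only [hhdef]
      rw [Finset.sum_range_succ, Finset.sum_range_one]
      norm_num
    have htail : (∑' n : ℕ, h (n + 2)) = c * Real.exp (3 * r) := by
      have : ∀ n : ℕ, h (n + 2) = c * ((3 * r) ^ n / (n.factorial : ℝ)) := by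
        intro n
        simp only [hhdef]
        rw [if_pos (by omega)]
        simp [mul_div_assoc]
      rw [tsum_congr this, tsum_mul_left]
      congr 1
      rw [Real.exp_eq_exp_ℝ, NormedSpace.exp_eq_tsum_div]
    rw [← hsplit, hzero, htail, zero_add]
    -- c * exp (3r) ≤ 3
    have hexp : Real.exp (3 * r) ≤ (3 : ℝ) ^ (3 * r) := by
      rw [← Real.exp_one_rpow (3 * r)]
      exact Real.rpow_le_rpow (le_of_lt (Real.exp_pos 1))
        (Real.exp_one_lt_d9.le.trans (by norm_num)) (by positivity)
    calc c * Real.exp (3 * r) ≤ c * (3 : ℝ) ^ (3 * r) := by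
          exact mul_le_mul_of_nonneg_left hexp hc0.le
      _ = (3 : ℝ) ^ ((1 - 3 * r) + 3 * r) := by rw [hcdef, ← Real.rpow_add (by norm_num)]
      _ = 3 := by norm_num
  -- conclude
  calc (∑' k, f k) ≤ ∑' k, (3 * g k + h k) := by
        apply Summable.tsum_le_tsum key hfs ((hgs.mul_left 3).add hhs)
    _ = 3 * (∑' k, g k) + ∑' k, h k := by
        rw [Summable.tsum_add (hgs.mul_left 3) hhs, tsum_mul_left]
    _ ≤ 3 * (∑' k, g k) + 3 := by linarith
    _ = 3 + 3 * ∑' k, g k := by ring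
end

section
/- In the decomposition of an arbitrary set partition of an n-set: if the blocks are sorted by size a_1 ≤ ... ≤ a_l and l_0 is the largest index such that a_i ≤ 1 + Σ_{j<i} a_j holds for all i ≤ l_0 (with l_0 = 0 if a_1 > 1), then the blocks of sizes a_1,...,a_{l_0} form a practical set partition of a set of k = Σ_{j≤l_0} a_j elements, and the remaining blocks all have size strictly greater than k + 1. -/
lemma practical_aux (b : List ℕ)
    (h : ∀ i : Fin b.length, b.get i ≤ 1 + (b.take i).sum) :
    ∀ m ≤ b.sum, ∃ t : List ℕ, t.Sublist b ∧ t.sum = m := by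
  induction b using List.reverseRecOn with
  | nil =>
    intro m hm
    simp at hm
    exact ⟨[], List.Sublist.refl _, by simp [hm]⟩
  | append_singleton c x ih =>
    have hx : x ≤ 1 + c.sum := by
      have := h ⟨c.length, by simp⟩
      simpa using this
    have hc : ∀ i : Fin c.length, c.get i ≤ 1 + (c.take i).sum := by
      intro i
      have hlt : (i : ℕ) < (c ++ [x]).length := by simp
      have := h ⟨i, hlt⟩
      simp only [List.get_eq_getElem] at this ⊢
      rwa [List.getElem_append_left i.isLt,
        List.take_append_of_le_length (le_of_lt i.isLt)] at this
    intro m hm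
    rw [List.sum_append, List.sum_singleton] at hm
    by_cases hmc : m ≤ c.sum
    · obtain ⟨t, ht, hs⟩ := ih hc m hmc
      exact ⟨t, ht.trans (List.sublist_append_left c [x]), hs⟩
    · obtain ⟨t, ht, hs⟩ := ih hc (m - x) (by omega)
      refine ⟨t ++ [x], ht.append (List.Sublist.refl _), ?_⟩
      rw [List.sum_append, List.sum_singleton, hs]
      omega

/-- Structural decomposition of a partition by its sorted list `a` of (positive) block
sizes: if `l0` is the largest index such that `a_i ≤ 1 + Σ_{j<i} a_j` for all `i ≤ l0`
(with `l0 = 0` if `a_1 > 1`), then, with `k = Σ_{j ≤ l0} a_j`, the first `l0` blocks form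
a practical partition of a `k`-element set (every `m ≤ k` is one of their subset sums),
and every remaining block has size strictly greater than `k + 1`. -/
theorem partition_decomposition (a : List ℕ) (hsort : a.Pairwise (· ≤ ·))
    (hpos : ∀ x ∈ a, 0 < x) (l0 : ℕ) (hl0 : l0 ≤ a.length)
    (hcond : ∀ i : Fin a.length, (i : ℕ) < l0 → a.get i ≤ 1 + (a.take i).sum)
    (hmax : ∀ h : l0 < a.length, 1 + (a.take l0).sum < a.get ⟨l0, h⟩) :
    (∀ m ≤ (a.take l0).sum, ∃ t : List ℕ, t.Sublist (a.take l0) ∧ t.sum = m) ∧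
    (∀ i : Fin a.length, l0 ≤ (i : ℕ) → (a.take l0).sum + 1 < a.get i) := by
  constructor
  · have hlen : (a.take l0).length = l0 := by simp [hl0]
    apply practical_aux
    intro i
    have hil : (i : ℕ) < l0 := by have := i.isLt; simp [List.length_take] at this; omega
    have hia : (i : ℕ) < a.length := lt_of_lt_of_le hil hl0
    have := hcond ⟨i, hia⟩ hil
    simp only [List.get_eq_getElem] at this ⊢
    rwa [List.getElem_take, List.take_take, min_eq_left (le_of_lt hil)]
  · intro i hi
    have hla : l0 < a.length := lt_of_le_of_lt hi i.isLt
    have h1 := hmax hla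
    have h2 : a.get ⟨l0, hla⟩ ≤ a.get i := hsort.rel_get_of_le (by exact hi)
    omega
end
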